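/- arXiv:1205.2819 — 5 statements merged into one kernel-verified Lean document; each statement's English description precedes it below -/
import Mathlib

section
/- Let H and K be two almost normal subgroups of a group G and suppose there exists g ∈ G such that gKg⁻¹ is strongly commensurable with H. If L is a length function on G with L vanishing on both gKg⁻¹ and H, then the Hecke pair (G,H) has property (RD) with respect to L if and only if the Hecke pair (G,K) has property (RD) with respect to L. -/
noncomputable section

namespace HeckeRDPaper

/-- The conjugate subgroup `gHg⁻¹`. -/
def conjS {G : Type*} [Group G] (g : G) (H : Subgroup G) : Subgroup G :=
  Subgroup.map (MulAut.conj g).toMonoidHom H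

/-- `H` is an almost normal subgroup of `G`: the index `|H : H ∩ gHg⁻¹|` is finite
for every `g ∈ G`. -/
def AlmostNormal {G : Type*} [Group G] (H : Subgroup G) : Prop :=
  ∀ g : G, (conjS g H).relIndex H ≠ 0

/-- `H` and `K` are strongly commensurable: `H ∩ K` has finite index in both `H` and `K`. -/
def StronglyCommensurable {G : Type*} [Group G] (H K : Subgroup G) : Prop :=
  (H ⊓ K).relIndex H ≠ 0 ∧ (H ⊓ K).relIndex K ≠ 0

/-- `H` and `K` are commensurable: `H` and `gKg⁻¹` are strongly commensurable
for some `g ∈ G`. -/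
def Commens {G : Type*} [Group G] (H K : Subgroup G) : Prop :=
  ∃ g : G, StronglyCommensurable H (conjS g K)

/-- A length function on a group `G`. -/
structure IsLengthFunction {G : Type*} [Group G] (L : G → ℝ) : Prop where
  nonneg : ∀ g, 0 ≤ L g
  map_one : L 1 = 0
  map_inv : ∀ g, L g⁻¹ = L g
  subadd : ∀ g h, L (g * h) ≤ L g + L h

/-- A length function on the Hecke pair `(G, H)`: a length function on `G`
vanishing on `H`. -/
def IsHeckeLength {G : Type*} [Group G] (H : Subgroup G) (L : G → ℝ) : Prop :=
  IsLengthFunction L ∧ ∀ h ∈ H, L h = 0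

/-- `L₁` dominates `L₂` if `L₂ ≤ a L₁ + b` for some positive constants `a`, `b`. -/
def Dominates {G : Type*} [Group G] (L₁ L₂ : G → ℝ) : Prop :=
  ∃ a b : ℝ, 0 < a ∧ 0 < b ∧ ∀ g, L₂ g ≤ a * L₁ g + b

/-- Two length functions are equivalent if they dominate each other. -/
def EquivLen {G : Type*} [Group G] (L₁ L₂ : G → ℝ) : Prop :=
  Dominates L₁ L₂ ∧ Dominates L₂ L₁

/-- The set `H\G` of right cosets of `H` in `G`. -/
abbrev RCos {G : Type*} [Group G] (H : Subgroup G) := Quotient (QuotientGroup.rightRel H)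

/-- The `ℓ²`-norm over the right cosets `H\G` of a (left `H`-invariant) function on `G`,
computed using the set of representatives given by `Quotient.out`. -/
def l2 {G : Type*} [Group G] (H : Subgroup G) (f : G → ℝ) : ℝ :=
  Real.sqrt (∑' x : RCos H, f x.out ^ 2)

/-- The convolution `(f∗k)(g) = Σ_{x ∈ ⟨H\G⟩} f(gx⁻¹) k(x)`, the sum being over the
set of representatives of the right cosets of `H` given by `Quotient.out`. -/
def conv {G : Type*} [Group G] (H : Subgroup G) (f k : G → ℝ) : G → ℝ :=
  fun g => ∑' x : RCos H, f (g * x.out⁻¹) * k x.out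

/-- `f` is supported on finitely many double cosets of `H`. -/
def FinDosetSupp {G : Type*} [Group G] (H : Subgroup G) (f : G → ℝ) : Prop :=
  {s : Set G | ∃ g : G, f g ≠ 0 ∧
    s = {y : G | ∃ h₁ ∈ H, ∃ h₂ ∈ H, y = h₁ * g * h₂}}.Finite

/-- The Hecke pair `(G, H)` has property (RD) with respect to the length function `L`:
there is a polynomial `P` such that `‖f∗k‖₂ ≤ P(r) ‖f‖₂ ‖k‖₂` for every `r > 0`,
every nonnegative `H`-bi-invariant `f` supported on finitely many double cosets and
with `L ≤ r` on its support, and every nonnegative left-`H`-invariant square-summable `k`. -/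
def HeckeRDwrt {G : Type*} [Group G] (H : Subgroup G) (L : G → ℝ) : Prop :=
  ∃ P : Polynomial ℝ, ∀ r : ℝ, 0 < r → ∀ f k : G → ℝ,
    (∀ g, 0 ≤ f g) →
    (∀ g : G, ∀ h₁ ∈ H, ∀ h₂ ∈ H, f (h₁ * g * h₂) = f g) →
    FinDosetSupp H f →
    (∀ g, f g ≠ 0 → L g ≤ r) →
    (∀ g, 0 ≤ k g) →
    (∀ g : G, ∀ h ∈ H, k (h * g) = k g) →
    Summable (fun x : RCos H => k x.out ^ 2) →
    l2 H (conv H f k) ≤ P.eval r * l2 H f * l2 H k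

/-- The Hecke pair `(G, H)` has property (RD): it has property (RD) with respect to
some length function on `(G, H)`. -/
def HeckeRD {G : Type*} [Group G] (H : Subgroup G) : Prop :=
  ∃ L : G → ℝ, IsHeckeLength H L ∧ HeckeRDwrt H L

/-- A group has property (RD) with respect to `L` if the Hecke pair `(Γ, {1})` does. -/
def GroupRDwrt (Γ : Type*) [Group Γ] (L : Γ → ℝ) : Prop :=
  HeckeRDwrt (⊥ : Subgroup Γ) L

/-- A group has property (RD) if the Hecke pair `(Γ, {1})` does. -/
def GroupRD (Γ : Type*) [Group Γ] : Prop :=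
  HeckeRD (⊥ : Subgroup Γ)

/-- A set-theoretic cross-section `σ : E/N → E` of the quotient map which is
consistent with the Hecke pair `(·, H)`, i.e. `π ∘ σ = id`, `σ(1) = 1` and
`σ(x) H σ(x)⁻¹ = H` for all `x ∈ E/N`. -/
def ConsistentSection {E : Type*} [Group E] (N : Subgroup E) [N.Normal] (H : Subgroup E)
    (σ : E ⧸ N → E) : Prop :=
  (∀ x : E ⧸ N, (QuotientGroup.mk (σ x) : E ⧸ N) = x) ∧ σ 1 = 1 ∧
    ∀ x : E ⧸ N, ∀ h : E, h ∈ H ↔ σ x * h * (σ x)⁻¹ ∈ H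

end HeckeRDPaper

namespace HeckeAux
open HeckeRDPaper ENNReal

variable {G : Type*} [Group G]

/-- `Quotient.mk` for right cosets. -/
def mkR (N : Subgroup G) (z : G) : RCos N := Quotient.mk (QuotientGroup.rightRel N) z

lemma mkR_out {N : Subgroup G} (x : RCos N) : mkR N x.out = x := Quotient.out_eq x

lemma mkR_eq {N : Subgroup G} {z z' : G} (h : z * z'⁻¹ ∈ N) : mkR N z = mkR N z' :=
  Quotient.sound ((QuotientGroup.rightRel_apply).2 (by simpa using N.inv_mem h))

lemma exists_out_mkR (N : Subgroup G) (z : G) : ∃ n ∈ N, (mkR N z).out = n * z := by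
  have h : mkR N ((mkR N z).out) = mkR N z := mkR_out _
  have h2 := Quotient.exact h
  have h3 : z * ((mkR N z).out)⁻¹ ∈ N := QuotientGroup.rightRel_apply.mp h2
  refine ⟨(z * ((mkR N z).out)⁻¹)⁻¹, N.inv_mem h3, ?_⟩
  group

lemma out_mkR_inv {N : Subgroup G} {X : Type*} {φ : G → X}
    (hφ : ∀ n ∈ N, ∀ z, φ (n * z) = φ z) (z : G) : φ ((mkR N z).out) = φ z := by
  obtain ⟨n, hn, hout⟩ := exists_out_mkR N z
  rw [hout, hφ n hn]

lemma mkR_inj {N : Subgroup G} {z z' : G} (h : mkR N z = mkR N z') :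
    ∃ n ∈ N, z = n * z' := by
  have h2 := Quotient.exact h
  have h3 : z' * z⁻¹ ∈ N := QuotientGroup.rightRel_apply.mp h2
  exact ⟨(z' * z⁻¹)⁻¹, N.inv_mem h3, by group⟩

/-- Right translation on right cosets. -/
def rT (N : Subgroup G) (c : G) : RCos N ≃ RCos N where
  toFun x := mkR N (x.out * c)
  invFun x := mkR N (x.out * c⁻¹)
  left_inv x := by
    show mkR N ((mkR N (x.out * c)).out * c⁻¹) = x
    obtain ⟨n, hn, hout⟩ := exists_out_mkR N (x.out * c)
    rw [hout]
    have h5 : n * (x.out * c) * c⁻¹ = n * x.out := by group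
    rw [h5]
    have h4 : mkR N (n * x.out) = mkR N x.out := mkR_eq (by simpa using hn)
    rw [h4, mkR_out]
  right_inv x := by
    show mkR N ((mkR N (x.out * c⁻¹)).out * c) = x
    obtain ⟨n, hn, hout⟩ := exists_out_mkR N (x.out * c⁻¹)
    rw [hout]
    have h5 : n * (x.out * c⁻¹) * c = n * x.out := by group
    rw [h5]
    have h4 : mkR N (n * x.out) = mkR N x.out := mkR_eq (by simpa using hn)
    rw [h4, mkR_out]

lemma mem_conjS {g y : G} {K : Subgroup G} : y ∈ conjS g K ↔ g⁻¹ * y * g ∈ K := by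
  constructor
  · rintro ⟨k, hk, rfl⟩
    simpa [MulAut.conj_apply, mul_assoc] using hk
  · intro h
    refine ⟨g⁻¹ * y * g, h, ?_⟩
    show g * (g⁻¹ * y * g) * g⁻¹ = y
    group

lemma conjS_conjS (c g : G) (K : Subgroup G) : conjS c (conjS g K) = conjS (c * g) K := by
  ext y
  simp [mem_conjS, mul_assoc, mul_inv_rev]

lemma conjS_conjS_inv (g : G) (K : Subgroup G) : conjS g⁻¹ (conjS g K) = K := by
  rw [conjS_conjS, inv_mul_cancel]
  ext y
  simp [mem_conjS]

lemma relindex_conjS (c : G) (X Y : Subgroup G) :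
    (conjS c X).relIndex (conjS c Y) = X.relIndex Y := by
  have hinj : Function.Injective (MulAut.conj c).toMonoidHom := (MulAut.conj c).injective
  have h1 : Subgroup.comap (MulAut.conj c).toMonoidHom (conjS c X) = X :=
    Subgroup.comap_map_eq_self_of_injective hinj X
  calc (conjS c X).relIndex (conjS c Y)
      = (Subgroup.comap (MulAut.conj c).toMonoidHom (conjS c X)).relIndex Y :=
        (Subgroup.relIndex_comap (H := conjS c X) (MulAut.conj c).toMonoidHom Y).symm
    _ = X.relIndex Y := by rw [h1]

lemma almostNormal_conjS (g : G) (K : Subgroup G) (hK : AlmostNormal K) :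
    AlmostNormal (conjS g K) := by
  intro c
  rw [conjS_conjS]
  have h1 : conjS (c * g) K = conjS g (conjS (g⁻¹ * c * g) K) := by
    rw [conjS_conjS]; congr 1; group
  rw [h1, relindex_conjS]
  exact hK _

lemma conjS_inf (c : G) (A B : Subgroup G) :
    conjS c (A ⊓ B) = conjS c A ⊓ conjS c B :=
  Subgroup.map_inf A B _ (MulAut.conj c).injective

lemma almostNormal_inf {A B : Subgroup G} (hA : AlmostNormal A) (hB : AlmostNormal B) :
    AlmostNormal (A ⊓ B) := by
  intro c
  rw [conjS_inf]
  refine Subgroup.relIndex_inf_ne_zero ?_ ?_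
  · exact mt (Subgroup.relIndex_eq_zero_of_le_right inf_le_left) (hA c)
  · exact mt (Subgroup.relIndex_eq_zero_of_le_right inf_le_right) (hB c)

end HeckeAux
namespace HeckeAux
open HeckeRDPaper ENNReal

variable {G : Type*} [Group G]

/-- The double coset set, in the shape used by `FinDosetSupp`. -/
def Dset (N : Subgroup G) (c : G) : Set G := {y : G | ∃ h₁ ∈ N, ∃ h₂ ∈ N, y = h₁ * c * h₂}

lemma self_mem_Dset (N : Subgroup G) (c : G) : c ∈ Dset N c :=
  ⟨1, N.one_mem, 1, N.one_mem, by group⟩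

lemma mul_left_mem_Dset {N : Subgroup G} {n z c : G} (hn : n ∈ N) (hz : z ∈ Dset N c) :
    n * z ∈ Dset N c := by
  obtain ⟨h₁, hh₁, h₂, hh₂, rfl⟩ := hz
  exact ⟨n * h₁, N.mul_mem hn hh₁, h₂, hh₂, by group⟩

lemma mul_right_mem_Dset {N : Subgroup G} {n z c : G} (hn : n ∈ N) (hz : z ∈ Dset N c) :
    z * n ∈ Dset N c := by
  obtain ⟨h₁, hh₁, h₂, hh₂, rfl⟩ := hz
  exact ⟨h₁, hh₁, h₂ * n, N.mul_mem hh₂ hn, by group⟩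

lemma inv_mem_Dset {N : Subgroup G} {z c : G} (hz : z ∈ Dset N c) : z⁻¹ ∈ Dset N c⁻¹ := by
  obtain ⟨h₁, hh₁, h₂, hh₂, rfl⟩ := hz
  exact ⟨h₂⁻¹, N.inv_mem hh₂, h₁⁻¹, N.inv_mem hh₁, by group⟩

/-- A bi-invariant function is constant on double cosets. -/
lemma biinv_const_on_Dset {N : Subgroup G} {f : G → ℝ}
    (hf : ∀ g : G, ∀ h₁ ∈ N, ∀ h₂ ∈ N, f (h₁ * g * h₂) = f g) {z c : G}
    (hz : z ∈ Dset N c) : f z = f c := by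
  obtain ⟨h₁, hh₁, h₂, hh₂, rfl⟩ := hz
  exact hf c h₁ hh₁ h₂ hh₂

/-- Key finiteness: in an almost normal subgroup, a double coset contains only finitely
many right cosets. -/
lemma DCfin (N : Subgroup G) (hAN : AlmostNormal N) (c : G) :
    {x : RCos N | x.out ∈ Dset N c}.Finite := by
  set D := conjS c⁻¹ N ⊓ N with hD
  have hrel : D.relIndex N ≠ 0 := by
    rw [hD, Subgroup.inf_relIndex_right]
    exact hAN c⁻¹
  have hcard : Nat.card (N ⧸ D.subgroupOf N) ≠ 0 := hrel
  have hfinQ : Finite (N ⧸ D.subgroupOf N) := (Nat.card_ne_zero.mp hcard).2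
  have hQ : Finite (Quotient (QuotientGroup.rightRel (D.subgroupOf N))) :=
    Finite.of_equiv _ (QuotientGroup.quotientRightRelEquivQuotientLeftRel _).symm
  rw [← Set.finite_coe_iff]
  have pick : ∀ x : {x : RCos N // x.out ∈ Dset N c},
      ∃ p : N, ∃ q : N, (x : RCos N).out = (p : G) * c * q := by
    rintro ⟨x, h₁, hh₁, h₂, hh₂, he⟩
    exact ⟨⟨h₁, hh₁⟩, ⟨h₂, hh₂⟩, he⟩
  refine Finite.of_injective (fun x =>
    Quotient.mk (QuotientGroup.rightRel (D.subgroupOf N))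
      ((pick x).choose_spec.choose : N)) ?_
  intro x x' hxx
  set q := (pick x).choose_spec.choose with hq
  set q' := (pick x').choose_spec.choose with hq'
  have hxout : (x : RCos N).out = ((pick x).choose : G) * c * q := (pick x).choose_spec.choose_spec
  have hxout' : (x' : RCos N).out = ((pick x').choose : G) * c * q' :=
    (pick x').choose_spec.choose_spec
  have hrelq := Quotient.exact hxx
  have hmem : q' * q⁻¹ ∈ D.subgroupOf N := QuotientGroup.rightRel_apply.mp hrelq
  rw [Subgroup.mem_subgroupOf] at hmem
  rw [hD, Subgroup.mem_inf] at hmem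
  have hmemc : c * ((q' : G) * (q : G)⁻¹) * c⁻¹ ∈ N := by
    have h9 := hmem.1
    rw [mem_conjS] at h9
    simpa [mul_assoc] using h9
  have hfinal : (x' : RCos N).out * ((x : RCos N).out)⁻¹ ∈ N := by
    rw [hxout, hxout']
    have heq : ((pick x').choose : G) * c * q' * (((pick x).choose : G) * c * q)⁻¹ =
        ((pick x').choose : G) * (c * ((q' : G) * (q : G)⁻¹) * c⁻¹) * (((pick x).choose : G))⁻¹ := by
      group
    rw [heq]
    exact N.mul_mem (N.mul_mem (pick x').choose.2 hmemc) (N.inv_mem (pick x).choose.2)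
  have : mkR N (x' : RCos N).out = mkR N (x : RCos N).out := mkR_eq hfinal
  rw [mkR_out, mkR_out] at this
  exact Subtype.ext this.symm

/-- The support of `f` on double cosets, as a union of `Dset`s. -/
lemma supp_subset_Dsets {N : Subgroup G} {f : G → ℝ} (hFD : FinDosetSupp N f) :
    ∃ C : Set G, C.Finite ∧ (∀ z, f z ≠ 0 → ∃ c ∈ C, z ∈ Dset N c) ∧
      (∀ c ∈ C, f c ≠ 0) := by
  classical
  set Fam : Set (Set G) := {s : Set G | ∃ g : G, f g ≠ 0 ∧
      s = {y : G | ∃ h₁ ∈ N, ∃ h₂ ∈ N, y = h₁ * g * h₂}} with hFam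
  have hFamFin : Fam.Finite := hFD
  have hchoice : ∀ s ∈ Fam, ∃ c : G, f c ≠ 0 ∧ s = Dset N c := fun s hs => hs
  choose w hw1 hw2 using hchoice
  set W : Set G → G := fun s => if h : s ∈ Fam then w s h else 1 with hW
  refine ⟨W '' Fam, hFamFin.image W, ?_, ?_⟩
  · intro z hz
    have hsF : Dset N z ∈ Fam := ⟨z, hz, rfl⟩
    refine ⟨W (Dset N z), Set.mem_image_of_mem W hsF, ?_⟩
    have hWeq : W (Dset N z) = w (Dset N z) hsF := dif_pos hsF
    have := hw2 (Dset N z) hsF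
    rw [hWeq, ← this]
    exact self_mem_Dset N z
  · rintro c ⟨s, hs, rfl⟩
    have hWeq : W s = w s hs := dif_pos hs
    rw [hWeq]
    exact hw1 s hs

end HeckeAux
namespace HeckeAux
open HeckeRDPaper ENNReal

variable {G : Type*} [Group G]

section TsumUtil
variable {ι : Type*}

lemma tsum_le_ncard_mul (φ : ι → ℝ≥0∞) (B : Set ι) (hB : B.Finite)
    (h0 : ∀ i, i ∉ B → φ i = 0) (v : ℝ≥0∞) (hv : ∀ i, φ i ≤ v) :
    ∑' i, φ i ≤ B.ncard * v := by
  classical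
  have := hB.fintype
  rw [tsum_eq_sum (s := hB.toFinset) (fun b hb => h0 b (by simpa using hb))]
  calc ∑ i ∈ hB.toFinset, φ i ≤ hB.toFinset.card • v :=
        Finset.sum_le_card_nsmul _ _ v (fun i _ => hv i)
    _ = B.ncard * v := by
        rw [nsmul_eq_mul, Set.ncard_eq_toFinset_card B hB]
  
lemma tsum_ne_top_of_finite_support (φ : ι → ℝ≥0∞) (B : Set ι) (hB : B.Finite)
    (h0 : ∀ i, i ∉ B → φ i = 0) (ht : ∀ i, φ i ≠ ⊤) : ∑' i, φ i ≠ ⊤ := by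
  classical
  have := hB.fintype
  rw [tsum_eq_sum (s := hB.toFinset) (fun b hb => h0 b (by simpa using hb))]
  exact (ENNReal.sum_lt_top.mpr (fun i _ => lt_top_iff_ne_top.mpr (ht i))).ne

lemma mul_self_le_sq_add_sq (a b : ℝ≥0∞) : a * b ≤ a ^ 2 + b ^ 2 := by
  rcases le_total a b with h | h
  · calc a * b ≤ b * b := mul_le_mul_left h b
      _ = b ^ 2 := (sq b).symm
      _ ≤ a ^ 2 + b ^ 2 := le_add_self
  · calc a * b ≤ a * a := mul_le_mul_right h a
      _ = a ^ 2 := (sq a).symm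
      _ ≤ a ^ 2 + b ^ 2 := le_self_add

lemma tsum_mul_tsum_ennreal (a b : ι → ℝ≥0∞) :
    (∑' i, a i) * (∑' j, b j) = ∑' i, ∑' j, a i * b j := by
  rw [← ENNReal.tsum_mul_right]
  exact tsum_congr fun i => (ENNReal.tsum_mul_left).symm

/-- Weighted Cauchy–Schwarz in `ℝ≥0∞` (with a harmless factor 2). -/
lemma weighted_CS (f k : ι → ℝ≥0∞) :
    (∑' i, f i * k i) ^ 2 ≤ 2 * ((∑' i, f i) * (∑' i, f i * k i ^ 2)) := by
  have h1 : (∑' i, f i * k i) ^ 2 = ∑' i, ∑' j, (f i * k i) * (f j * k j) := by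
    rw [sq]; exact tsum_mul_tsum_ennreal _ _
  rw [h1]
  have h2 : ∀ i j : ι, (f i * k i) * (f j * k j) ≤
      f i * f j * (k i ^ 2 + k j ^ 2) := by
    intro i j
    calc (f i * k i) * (f j * k j) = (f i * f j) * (k i * k j) := by ring
      _ ≤ (f i * f j) * (k i ^ 2 + k j ^ 2) := mul_le_mul_right (mul_self_le_sq_add_sq _ _) _
  calc ∑' i, ∑' j, (f i * k i) * (f j * k j)
      ≤ ∑' i, ∑' j, f i * f j * (k i ^ 2 + k j ^ 2) :=
        ENNReal.tsum_le_tsum fun i => ENNReal.tsum_le_tsum fun j => h2 i j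
    _ = ∑' i, ∑' j, (f i * (f j * k j ^ 2) + (f i * k i ^ 2) * f j) := by
        refine tsum_congr fun i => tsum_congr fun j => by ring
    _ = ∑' i, ((f i * ∑' j, f j * k j ^ 2) + (f i * k i ^ 2) * ∑' j, f j) := by
        refine tsum_congr fun i => ?_
        rw [ENNReal.tsum_add, ENNReal.tsum_mul_left, ENNReal.tsum_mul_left]
    _ = (∑' i, f i) * (∑' j, f j * k j ^ 2) + (∑' i, f i * k i ^ 2) * (∑' j, f j) := by
        rw [ENNReal.tsum_add, ENNReal.tsum_mul_right, ENNReal.tsum_mul_right]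
    _ = 2 * ((∑' i, f i) * (∑' i, f i * k i ^ 2)) := by ring
 
/-- `(∑ a)² ≤ 2 * card * ∑ a²` for finite sums in `ℝ≥0∞`. -/
lemma sq_finsum_le (s : Finset ι) (a : ι → ℝ≥0∞) :
    (∑ i ∈ s, a i) ^ 2 ≤ (2 * s.card) * ∑ i ∈ s, a i ^ 2 := by
  have h1 : (∑ i ∈ s, a i) ^ 2 = ∑ i ∈ s, ∑ j ∈ s, a i * a j := by
    rw [sq, Finset.sum_mul_sum]
  rw [h1]
  calc ∑ i ∈ s, ∑ j ∈ s, a i * a j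
      ≤ ∑ i ∈ s, ∑ j ∈ s, (a i ^ 2 + a j ^ 2) :=
        Finset.sum_le_sum fun i _ => Finset.sum_le_sum fun j _ => mul_self_le_sq_add_sq _ _
    _ = ∑ i ∈ s, (s.card * a i ^ 2 + ∑ j ∈ s, a j ^ 2) := by
        refine Finset.sum_congr rfl fun i _ => ?_
        rw [Finset.sum_add_distrib, Finset.sum_const, nsmul_eq_mul]
    _ = s.card * ∑ i ∈ s, a i ^ 2 + s.card * ∑ j ∈ s, a j ^ 2 := by
        rw [Finset.sum_add_distrib, ← Finset.mul_sum, Finset.sum_const, nsmul_eq_mul]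
    _ = (2 * s.card) * ∑ i ∈ s, a i ^ 2 := by ring

lemma ofReal_tsum_le (φ : ι → ℝ) (h0 : ∀ i, 0 ≤ φ i) :
    ENNReal.ofReal (∑' i, φ i) ≤ ∑' i, ENNReal.ofReal (φ i) := by
  by_cases hs : Summable φ
  · rw [ENNReal.ofReal_tsum_of_nonneg h0 hs]
  · rw [tsum_eq_zero_of_not_summable hs]
    simp

end TsumUtil

section SuppFin
variable (N : Subgroup G) {f : G → ℝ}

lemma FSright (hAN : AlmostNormal N) (hFD : FinDosetSupp N f) :
    ∃ A : Set (RCos N), A.Finite ∧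
      ∀ w : G, ∀ x : RCos N, f (x.out * w) ≠ 0 → rT N w x ∈ A := by
  obtain ⟨C, hCfin, hCsupp, -⟩ := supp_subset_Dsets hFD
  refine ⟨⋃ c ∈ C, {x : RCos N | x.out ∈ Dset N c}, hCfin.biUnion (fun c _ => DCfin N hAN c),
    ?_⟩
  intro w x hx
  obtain ⟨c, hc, hmem⟩ := hCsupp _ hx
  refine Set.mem_biUnion hc ?_
  obtain ⟨n, hn, hout⟩ := exists_out_mkR N (x.out * w)
  show (rT N w x).out ∈ Dset N c
  show (mkR N (x.out * w)).out ∈ Dset N c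
  rw [hout]
  exact mul_left_mem_Dset hn hmem

lemma FSleft (hAN : AlmostNormal N) (hFD : FinDosetSupp N f) :
    ∃ A : Set (RCos N), A.Finite ∧
      ∀ g : G, ∀ x : RCos N, f (g * x.out⁻¹) ≠ 0 → rT N g⁻¹ x ∈ A := by
  obtain ⟨C, hCfin, hCsupp, -⟩ := supp_subset_Dsets hFD
  refine ⟨⋃ c ∈ C, {x : RCos N | x.out ∈ Dset N c⁻¹},
    hCfin.biUnion (fun c _ => DCfin N hAN c⁻¹), ?_⟩
  intro g x hx
  obtain ⟨c, hc, hmem⟩ := hCsupp _ hx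
  refine Set.mem_biUnion hc ?_
  obtain ⟨n, hn, hout⟩ := exists_out_mkR N (x.out * g⁻¹)
  show (mkR N (x.out * g⁻¹)).out ∈ Dset N c⁻¹
  rw [hout]
  have : x.out * g⁻¹ = (g * x.out⁻¹)⁻¹ := by group
  rw [this]
  exact mul_left_mem_Dset hn (inv_mem_Dset hmem)

lemma finite_of_mem_equiv_preimage {α : Type*} {A B : Set α} (e : α ≃ α)
    (hA : A.Finite) (h : ∀ x ∈ B, e x ∈ A) : B.Finite ∧ B.ncard ≤ A.ncard := by
  have hsub : B ⊆ e ⁻¹' A := h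
  have hpre : (e ⁻¹' A) = e.symm '' A := (e.image_symm_eq_preimage A).symm
  have hfin : (e ⁻¹' A).Finite := by rw [hpre]; exact hA.image _
  refine ⟨hfin.subset hsub, ?_⟩
  calc B.ncard ≤ (e ⁻¹' A).ncard := Set.ncard_le_ncard hsub hfin
    _ = A.ncard := by rw [hpre]; exact Set.ncard_image_of_injective A e.symm.injective

end SuppFin

end HeckeAux
namespace HeckeAux
open HeckeRDPaper ENNReal

variable {G : Type*} [Group G]

/-- `ℓ²` norm squared, valued in `ℝ≥0∞`. -/
def E2 (N : Subgroup G) (φ : G → ℝ) : ℝ≥0∞ := ∑' x : RCos N, (ENNReal.ofReal (φ x.out)) ^ 2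

/-- `ℝ≥0∞`-valued convolution. -/
def EC (N : Subgroup G) (f k : G → ℝ) (g : G) : ℝ≥0∞ :=
  ∑' x : RCos N, ENNReal.ofReal (f (g * x.out⁻¹)) * ENNReal.ofReal (k x.out)

lemma E2_ne_top_iff {N : Subgroup G} {φ : G → ℝ} (h0 : ∀ g, 0 ≤ φ g) :
    E2 N φ ≠ ⊤ ↔ Summable (fun x : RCos N => φ x.out ^ 2) := by
  constructor
  · intro h
    have := ENNReal.summable_toReal h
    refine this.congr fun x => ?_
    rw [ENNReal.toReal_pow, ENNReal.toReal_ofReal (h0 _)]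
  · intro hs
    have : E2 N φ = ENNReal.ofReal (∑' x : RCos N, φ x.out ^ 2) := by
      rw [ENNReal.ofReal_tsum_of_nonneg (fun x => sq_nonneg _) hs]
      exact tsum_congr fun x => (ENNReal.ofReal_pow (h0 _) 2).symm
    rw [this]
    exact ENNReal.ofReal_ne_top

lemma l2_eq_E2 {N : Subgroup G} {φ : G → ℝ} (h0 : ∀ g, 0 ≤ φ g) :
    l2 N φ = Real.sqrt (E2 N φ).toReal := by
  by_cases hs : Summable (fun x : RCos N => φ x.out ^ 2)
  · have h1 : E2 N φ = ENNReal.ofReal (∑' x : RCos N, φ x.out ^ 2) := by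
      rw [ENNReal.ofReal_tsum_of_nonneg (fun x => sq_nonneg _) hs]
      exact tsum_congr fun x => (ENNReal.ofReal_pow (h0 _) 2).symm
    rw [l2, h1, ENNReal.toReal_ofReal (tsum_nonneg fun x => sq_nonneg _)]
  · have h1 : E2 N φ = ⊤ := by
      by_contra h
      exact hs ((E2_ne_top_iff h0).mp h)
    rw [l2, tsum_eq_zero_of_not_summable hs, h1]
    simp

lemma E2_eq_ofReal_l2_sq {N : Subgroup G} {φ : G → ℝ} (h0 : ∀ g, 0 ≤ φ g)
    (hne : E2 N φ ≠ ⊤) : E2 N φ = ENNReal.ofReal (l2 N φ ^ 2) := by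
  rw [l2_eq_E2 h0, Real.sq_sqrt ENNReal.toReal_nonneg, ENNReal.ofReal_toReal hne]

lemma l2_le_of_E2_le {N : Subgroup G} {φ f k : G → ℝ} (h0φ : ∀ g, 0 ≤ φ g)
    (h0f : ∀ g, 0 ≤ f g) (h0k : ∀ g, 0 ≤ k g) {c : ℝ} (hc : 0 ≤ c)
    (hf : E2 N f ≠ ⊤) (hk : E2 N k ≠ ⊤)
    (h : E2 N φ ≤ ENNReal.ofReal (c ^ 2) * E2 N f * E2 N k) :
    l2 N φ ≤ c * l2 N f * l2 N k := by
  have hRne : ENNReal.ofReal (c ^ 2) * E2 N f * E2 N k ≠ ⊤ :=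
    ENNReal.mul_ne_top (ENNReal.mul_ne_top ENNReal.ofReal_ne_top hf) hk
  have h2 : (E2 N φ).toReal ≤ c ^ 2 * (E2 N f).toReal * (E2 N k).toReal := by
    have := ENNReal.toReal_mono hRne h
    rwa [ENNReal.toReal_mul, ENNReal.toReal_mul, ENNReal.toReal_ofReal (sq_nonneg c)] at this
  rw [l2_eq_E2 h0φ, l2_eq_E2 h0f, l2_eq_E2 h0k]
  calc Real.sqrt (E2 N φ).toReal ≤ Real.sqrt (c ^ 2 * (E2 N f).toReal * (E2 N k).toReal) :=
        Real.sqrt_le_sqrt h2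
    _ = c * Real.sqrt (E2 N f).toReal * Real.sqrt (E2 N k).toReal := by
        rw [Real.sqrt_mul (by positivity), Real.sqrt_mul (sq_nonneg c), Real.sqrt_sq hc]

lemma conv_nonneg' {N : Subgroup G} {f k : G → ℝ} (h0f : ∀ g, 0 ≤ f g) (h0k : ∀ g, 0 ≤ k g) :
    ∀ g, 0 ≤ conv N f k g :=
  fun _ => tsum_nonneg fun x => mul_nonneg (h0f _) (h0k _)

lemma ofReal_conv_le_EC {N : Subgroup G} {f k : G → ℝ} (h0f : ∀ g, 0 ≤ f g)
    (h0k : ∀ g, 0 ≤ k g) (g : G) : ENNReal.ofReal (conv N f k g) ≤ EC N f k g := by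
  refine le_trans (ofReal_tsum_le _ (fun x => mul_nonneg (h0f _) (h0k _))) ?_
  refine le_of_eq (tsum_congr fun x => ?_)
  rw [ENNReal.ofReal_mul (h0f _)]

lemma ofReal_conv_eq_EC {N : Subgroup G} {f k : G → ℝ} (h0f : ∀ g, 0 ≤ f g)
    (h0k : ∀ g, 0 ≤ k g) (g : G) (hfin : {x : RCos N | f (g * x.out⁻¹) ≠ 0}.Finite) :
    ENNReal.ofReal (conv N f k g) = EC N f k g := by
  classical
  have hsum : Summable (fun x : RCos N => f (g * x.out⁻¹) * k x.out) := by
    refine summable_of_ne_finset_zero (s := hfin.toFinset) fun x hx => ?_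
    have : f (g * x.out⁻¹) = 0 := by
      by_contra h
      exact hx (by simpa using h)
    rw [this, zero_mul]
  rw [conv, EC, ENNReal.ofReal_tsum_of_nonneg (fun x => mul_nonneg (h0f _) (h0k _)) hsum]
  exact tsum_congr fun x => ENNReal.ofReal_mul (h0f _)

section SuppCard
variable (N : Subgroup G) {f : G → ℝ}

lemma supp_right_card (hAN : AlmostNormal N) (hFD : FinDosetSupp N f) :
    ∃ d : ℕ, ∀ w : G, {x : RCos N | f (x.out * w) ≠ 0}.Finite ∧
      {x : RCos N | f (x.out * w) ≠ 0}.ncard ≤ d := by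
  obtain ⟨A, hAfin, hAmem⟩ := FSright N hAN hFD
  exact ⟨A.ncard, fun w => finite_of_mem_equiv_preimage (rT N w) hAfin (fun x hx => hAmem w x hx)⟩

lemma supp_out_finite (hAN : AlmostNormal N) (hFD : FinDosetSupp N f) :
    {x : RCos N | f x.out ≠ 0}.Finite := by
  obtain ⟨d, hd⟩ := supp_right_card N hAN hFD
  have := (hd 1).1
  have heq : {x : RCos N | f (x.out * 1) ≠ 0} = {x : RCos N | f x.out ≠ 0} := by
    simp [mul_one]
  rwa [heq] at this

lemma supp_left_card (hAN : AlmostNormal N) (hFD : FinDosetSupp N f) :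
    ∃ d : ℕ, ∀ g : G, {x : RCos N | f (g * x.out⁻¹) ≠ 0}.Finite ∧
      {x : RCos N | f (g * x.out⁻¹) ≠ 0}.ncard ≤ d := by
  obtain ⟨A, hAfin, hAmem⟩ := FSleft N hAN hFD
  exact ⟨A.ncard, fun g =>
    finite_of_mem_equiv_preimage (rT N g⁻¹) hAfin (fun x hx => hAmem g x hx)⟩

lemma E2_ne_top_of_findoset (hAN : AlmostNormal N) (hFD : FinDosetSupp N f) :
    E2 N f ≠ ⊤ := by
  refine tsum_ne_top_of_finite_support _ {x : RCos N | f x.out ≠ 0}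
    (supp_out_finite N hAN hFD) (fun x hx => ?_) (fun x => ?_)
  · have : f x.out = 0 := by simpa using hx
    simp [this]
  · exact pow_ne_top ENNReal.ofReal_ne_top

end SuppCard

set_option maxHeartbeats 800000 in
/-- A priori `ℓ²`-boundedness of the `ℝ≥0∞` convolution. -/
lemma EC_sq_tsum_ne_top (N : Subgroup G) (hAN : AlmostNormal N) {f k : G → ℝ}
    (h0f : ∀ g, 0 ≤ f g) (hbi : ∀ g : G, ∀ h₁ ∈ N, ∀ h₂ ∈ N, f (h₁ * g * h₂) = f g)
    (hFD : FinDosetSupp N f) (h0k : ∀ g, 0 ≤ k g) (hk : E2 N k ≠ ⊤) :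
    ∑' z : RCos N, (EC N f k z.out) ^ 2 ≠ ⊤ := by
  classical
  obtain ⟨C, hCfin, hCsupp, -⟩ := supp_subset_Dsets hFD
  set F0 : ℝ≥0∞ := ∑ c ∈ hCfin.toFinset, ENNReal.ofReal (f c) with hF0
  have hF0top : F0 ≠ ⊤ := (ENNReal.sum_lt_top.mpr (fun c _ => ENNReal.ofReal_lt_top)).ne
  have hF0le : ∀ z, ENNReal.ofReal (f z) ≤ F0 := by
    intro z
    by_cases hz : f z = 0
    · simp [hz]
    · obtain ⟨c, hc, hmem⟩ := hCsupp z hz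
      have : f z = f c := biinv_const_on_Dset hbi hmem
      rw [this]
      exact Finset.single_le_sum (f := fun c => ENNReal.ofReal (f c))
        (fun c _ => zero_le) (by simpa using hc)
  obtain ⟨d₁, hd₁⟩ := supp_left_card N hAN hFD
  obtain ⟨d₂, hd₂⟩ := supp_right_card N hAN hFD
  have hrow : ∀ g : G, (∑' y : RCos N, ENNReal.ofReal (f (g * y.out⁻¹))) ≤ d₁ * F0 := by
    intro g
    refine le_trans (tsum_le_ncard_mul _ {y : RCos N | f (g * y.out⁻¹) ≠ 0} (hd₁ g).1
      (fun y hy => by simp [show f (g * y.out⁻¹) = 0 by simpa using hy]) F0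
      (fun y => hF0le _)) ?_
    exact mul_le_mul_left (Nat.cast_le.mpr (hd₁ g).2) F0
  have hcol : ∀ w : G, (∑' z : RCos N, ENNReal.ofReal (f (z.out * w))) ≤ d₂ * F0 := by
    intro w
    refine le_trans (tsum_le_ncard_mul _ {z : RCos N | f (z.out * w) ≠ 0} (hd₂ w).1
      (fun z hz => by simp [show f (z.out * w) = 0 by simpa using hz]) F0
      (fun z => hF0le _)) ?_
    exact mul_le_mul_left (Nat.cast_le.mpr (hd₂ w).2) F0
  have hCS : ∀ z : RCos N, (EC N f k z.out) ^ 2 ≤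
      2 * ((d₁ * F0) * ∑' y : RCos N,
        ENNReal.ofReal (f (z.out * y.out⁻¹)) * (ENNReal.ofReal (k y.out)) ^ 2) := by
    intro z
    refine le_trans (weighted_CS (fun y : RCos N => ENNReal.ofReal (f (z.out * y.out⁻¹)))
      (fun y : RCos N => ENNReal.ofReal (k y.out))) ?_
    exact mul_le_mul_right (mul_le_mul_left (hrow z.out) _) 2
  have hbound : ∑' z : RCos N, (EC N f k z.out) ^ 2 ≤
      2 * ((d₁ * F0) * ((d₂ * F0) * E2 N k)) := by
    calc ∑' z : RCos N, (EC N f k z.out) ^ 2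
        ≤ ∑' z : RCos N, 2 * ((d₁ * F0) * ∑' y : RCos N,
            ENNReal.ofReal (f (z.out * y.out⁻¹)) * (ENNReal.ofReal (k y.out)) ^ 2) :=
          ENNReal.tsum_le_tsum hCS
      _ = 2 * ((d₁ * F0) * ∑' z : RCos N, ∑' y : RCos N,
            ENNReal.ofReal (f (z.out * y.out⁻¹)) * (ENNReal.ofReal (k y.out)) ^ 2) := by
          rw [ENNReal.tsum_mul_left, ENNReal.tsum_mul_left]
      _ = 2 * ((d₁ * F0) * ∑' y : RCos N, (ENNReal.ofReal (k y.out)) ^ 2 *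
            ∑' z : RCos N, ENNReal.ofReal (f (z.out * y.out⁻¹))) := by
          rw [ENNReal.tsum_comm (f := fun z y : RCos N =>
            ENNReal.ofReal (f (z.out * y.out⁻¹)) * (ENNReal.ofReal (k y.out)) ^ 2)]
          congr 1
          congr 1
          refine tsum_congr fun y => ?_
          rw [ENNReal.tsum_mul_right, mul_comm]
      _ ≤ 2 * ((d₁ * F0) * ∑' y : RCos N, (ENNReal.ofReal (k y.out)) ^ 2 * (d₂ * F0)) := by
          refine mul_le_mul_right (mul_le_mul_right (ENNReal.tsum_le_tsum fun (y : RCos N) =>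
            mul_le_mul_right (hcol y.out⁻¹) _) _) 2
      _ = 2 * ((d₁ * F0) * ((d₂ * F0) * E2 N k)) := by
          rw [ENNReal.tsum_mul_right, E2]
          ring
  refine ne_top_of_le_ne_top ?_ hbound
  refine ENNReal.mul_ne_top ENNReal.ofNat_ne_top (ENNReal.mul_ne_top
    (ENNReal.mul_ne_top (ENNReal.natCast_ne_top d₁) hF0top)
    (ENNReal.mul_ne_top (ENNReal.mul_ne_top (ENNReal.natCast_ne_top d₂) hF0top) hk))

end HeckeAux
namespace HeckeAux
open HeckeRDPaper ENNReal

variable {G : Type*} [Group G]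

/-- Conjugation equivalence between coset spaces. -/
def cjE (g : G) (K : Subgroup G) : RCos K ≃ RCos (conjS g K) where
  toFun x := mkR (conjS g K) (g * x.out * g⁻¹)
  invFun x := mkR K (g⁻¹ * x.out * g)
  left_inv x := by
    obtain ⟨n', hn', hout⟩ := exists_out_mkR (conjS g K) (g * x.out * g⁻¹)
    show mkR K (g⁻¹ * (mkR (conjS g K) (g * x.out * g⁻¹)).out * g) = x
    rw [hout]
    have hmem : g⁻¹ * n' * g ∈ K := mem_conjS.mp hn'
    have heq : g⁻¹ * (n' * (g * x.out * g⁻¹)) * g = (g⁻¹ * n' * g) * x.out := by group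
    rw [heq]
    have h2 : mkR K ((g⁻¹ * n' * g) * x.out) = mkR K x.out := mkR_eq (by simpa using hmem)
    rw [h2, mkR_out]
  right_inv x := by
    obtain ⟨n, hn, hout⟩ := exists_out_mkR K (g⁻¹ * x.out * g)
    show mkR (conjS g K) (g * (mkR K (g⁻¹ * x.out * g)).out * g⁻¹) = x
    rw [hout]
    have hmem : g * n * g⁻¹ ∈ conjS g K := mem_conjS.mpr (by simpa [mul_assoc] using hn)
    have heq : g * (n * (g⁻¹ * x.out * g)) * g⁻¹ = (g * n * g⁻¹) * x.out := by group
    rw [heq]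
    have h2 : mkR (conjS g K) ((g * n * g⁻¹) * x.out) = mkR (conjS g K) x.out :=
      mkR_eq (by simpa using hmem)
    rw [h2, mkR_out]

lemma cjE_out {g : G} {K : Subgroup G} {X : Type*} (φ : G → X)
    (hφ : ∀ n ∈ conjS g K, ∀ z, φ (n * z) = φ z) (x : RCos K) :
    φ ((cjE g K x).out) = φ (g * x.out * g⁻¹) :=
  out_mkR_inv hφ _

/-- Property (RD) passes to conjugate Hecke pairs (with the same length function). -/
lemma heckeRD_conj (K : Subgroup G) (L : G → ℝ) (hL : IsLengthFunction L) (g : G)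
    (h : HeckeRDwrt K L) : HeckeRDwrt (conjS g K) L := by
  classical
  obtain ⟨P, hP⟩ := h
  refine ⟨P.comp (Polynomial.X + Polynomial.C (2 * L g)), ?_⟩
  intro r hr f k h0f hbif hFDf hsupp h0k hinvk hsumk
  set K' := conjS g K with hK'
  have hfl : ∀ h ∈ K', ∀ z, f (h * z) = f z := by
    intro h hh z
    have := hbif z h hh 1 K'.one_mem
    simpa [mul_one] using this
  have hfr : ∀ h ∈ K', ∀ z, f (z * h) = f z := by
    intro h hh z
    have := hbif z 1 K'.one_mem h hh
    simpa [one_mul] using this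
  set f' : G → ℝ := fun x => f (g * x * g⁻¹) with hf'
  set k' : G → ℝ := fun x => k (g * x * g⁻¹) with hk'
  set r' : ℝ := r + 2 * L g with hr'def
  have hr' : 0 < r' := by
    have := hL.nonneg g
    rw [hr'def]; linarith
  have e := cjE g K
  -- value matching
  have hfval : ∀ x : RCos K, f ((cjE g K x).out) = f' x.out := fun x => cjE_out f hfl x
  have hkval : ∀ x : RCos K, k ((cjE g K x).out) = k' x.out := fun x => cjE_out k (fun n hn z => hinvk z n hn) x
  -- hypotheses for (K, f', k')
  have h0f' : ∀ z, 0 ≤ f' z := fun z => h0f _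
  have h0k' : ∀ z, 0 ≤ k' z := fun z => h0k _
  have hbif' : ∀ z : G, ∀ h₁ ∈ K, ∀ h₂ ∈ K, f' (h₁ * z * h₂) = f' z := by
    intro z h₁ hh₁ h₂ hh₂
    have m₁ : g * h₁ * g⁻¹ ∈ K' := mem_conjS.mpr (by simpa [mul_assoc] using hh₁)
    have m₂ : g * h₂ * g⁻¹ ∈ K' := mem_conjS.mpr (by simpa [mul_assoc] using hh₂)
    have heq : g * (h₁ * z * h₂) * g⁻¹ = (g * h₁ * g⁻¹) * (g * z * g⁻¹) * (g * h₂ * g⁻¹) := by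
      group
    show f (g * (h₁ * z * h₂) * g⁻¹) = f (g * z * g⁻¹)
    rw [heq]
    exact hbif _ _ m₁ _ m₂
  have hinvk' : ∀ z : G, ∀ h ∈ K, k' (h * z) = k' z := by
    intro z h hh
    have m : g * h * g⁻¹ ∈ K' := mem_conjS.mpr (by simpa [mul_assoc] using hh)
    have heq : g * (h * z) * g⁻¹ = (g * h * g⁻¹) * (g * z * g⁻¹) := by group
    show k (g * (h * z) * g⁻¹) = k (g * z * g⁻¹)
    rw [heq]
    exact hinvk _ _ m
  have hFDf' : FinDosetSupp K f' := by
    have himg : {s : Set G | ∃ z : G, f' z ≠ 0 ∧ s = Dset K z} ⊆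
        (Set.image (fun y => g⁻¹ * y * g)) ''
          {s : Set G | ∃ z : G, f z ≠ 0 ∧ s = Dset K' z} := by
      rintro s ⟨z, hz, rfl⟩
      refine ⟨Dset K' (g * z * g⁻¹), ⟨g * z * g⁻¹, hz, rfl⟩, ?_⟩
      ext y
      constructor
      · rintro ⟨w, ⟨h₁, hh₁, h₂, hh₂, rfl⟩, rfl⟩
        refine ⟨g⁻¹ * h₁ * g, mem_conjS.mp (by simpa [mul_assoc] using hh₁),
          g⁻¹ * h₂ * g, mem_conjS.mp (by simpa [mul_assoc] using hh₂), ?_⟩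
        group
      · rintro ⟨h₁, hh₁, h₂, hh₂, rfl⟩
        refine ⟨(g * h₁ * g⁻¹) * (g * z * g⁻¹) * (g * h₂ * g⁻¹),
          ⟨g * h₁ * g⁻¹, mem_conjS.mpr (by simpa [mul_assoc] using hh₁),
           g * h₂ * g⁻¹, mem_conjS.mpr (by simpa [mul_assoc] using hh₂), by group⟩, by group⟩
    exact Set.Finite.subset (Set.Finite.image _ hFDf) himg
  have hsupp' : ∀ z, f' z ≠ 0 → L z ≤ r' := by
    intro z hz
    have h1 : L (g * z * g⁻¹) ≤ r := hsupp _ hz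
    have h2 : L z = L (g⁻¹ * (g * z * g⁻¹) * g) := by congr 1; group
    have h3 : L (g⁻¹ * (g * z * g⁻¹) * g) ≤ L g⁻¹ + L (g * z * g⁻¹) + L g := by
      calc L (g⁻¹ * (g * z * g⁻¹) * g) ≤ L (g⁻¹ * (g * z * g⁻¹)) + L g :=
            hL.subadd _ _
        _ ≤ L g⁻¹ + L (g * z * g⁻¹) + L g := by
            have := hL.subadd g⁻¹ (g * z * g⁻¹); linarith
    rw [hL.map_inv] at h3
    rw [hr'def, h2]
    linarith
  have hsumk' : Summable (fun x : RCos K => k' x.out ^ 2) := by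
    have : (fun x : RCos K => k' x.out ^ 2) = (fun x' : RCos K' => k x'.out ^ 2) ∘ (cjE g K) := by
      funext x
      simp only [Function.comp_apply]
      rw [← hkval x]
    rw [this]
    exact ((cjE g K).summable_iff).mpr hsumk
  have key := hP r' hr' f' k' h0f' hbif' hFDf' hsupp' h0k' hinvk' hsumk'
  -- translate norms
  have hl2f : l2 K f' = l2 K' f := by
    rw [l2, l2]
    congr 1
    rw [← Equiv.tsum_eq (cjE g K) (fun x' : RCos K' => f x'.out ^ 2)]
    exact tsum_congr fun x => by rw [hfval x]
  have hl2k : l2 K k' = l2 K' k := by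
    rw [l2, l2]
    congr 1
    rw [← Equiv.tsum_eq (cjE g K) (fun x' : RCos K' => k x'.out ^ 2)]
    exact tsum_congr fun x => by rw [hkval x]
  have hconv : ∀ z : G, conv K' f k z = conv K f' k' (g⁻¹ * z * g) := by
    intro z
    rw [conv, conv]
    rw [← Equiv.tsum_eq (cjE g K) (fun x' : RCos K' => f (z * x'.out⁻¹) * k x'.out)]
    refine tsum_congr fun x => ?_
    obtain ⟨n', hn', hout⟩ := exists_out_mkR K' (g * x.out * g⁻¹)
    have houte : (cjE g K x).out = n' * (g * x.out * g⁻¹) := hout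
    rw [houte]
    have h1 : f (z * (n' * (g * x.out * g⁻¹))⁻¹) = f (z * (g * x.out⁻¹ * g⁻¹)) := by
      have heq : z * (n' * (g * x.out * g⁻¹))⁻¹ = (z * (g * x.out⁻¹ * g⁻¹)) * n'⁻¹ := by
        group
      rw [heq, hfr _ (K'.inv_mem hn')]
    have h2 : k (n' * (g * x.out * g⁻¹)) = k (g * x.out * g⁻¹) := hinvk _ n' hn'
    rw [h1, h2]
    have h3 : g * (g⁻¹ * z * g) * x.out⁻¹ * g⁻¹ = z * (g * x.out⁻¹ * g⁻¹) := by group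
    show _ = f (g * (g⁻¹ * z * g * x.out⁻¹) * g⁻¹) * k (g * x.out * g⁻¹)
    rw [show g * (g⁻¹ * z * g * x.out⁻¹) * g⁻¹ = g * (g⁻¹ * z * g) * x.out⁻¹ * g⁻¹ by group,
      h3]
  have hconvl2 : l2 K' (conv K' f k) = l2 K (conv K f' k') := by
    rw [l2, l2]
    congr 1
    rw [← Equiv.tsum_eq (cjE g K) (fun x' : RCos K' => conv K' f k x'.out ^ 2)]
    refine tsum_congr fun x => ?_
    have hcl : ∀ n ∈ K', ∀ z, conv K' f k (n * z) = conv K' f k z := by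
      intro n hn z
      rw [conv, conv]
      refine tsum_congr fun y => ?_
      rw [show n * z * y.out⁻¹ = n * (z * y.out⁻¹) by group, hfl _ hn]
    have h4 : conv K' f k ((cjE g K x).out) = conv K' f k (g * x.out * g⁻¹) :=
      cjE_out (conv K' f k) hcl x
    rw [h4, hconv]
    congr 2
    group
  rw [hconvl2, ← hl2f, ← hl2k]
  have heval : (P.comp (Polynomial.X + Polynomial.C (2 * L g))).eval r = P.eval r' := by
    rw [Polynomial.eval_comp]
    simp [hr'def]
  rw [heval]
  exact key
end HeckeAux
namespace HeckeAux
open HeckeRDPaper ENNReal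

variable {G : Type*} [Group G]

/-- Right cosets of `M` inside `H`. -/
abbrev Tq (H M : Subgroup G) := RCos (M.subgroupOf H)
/-- Left cosets of `M` inside `H`. -/
abbrev Sq (H M : Subgroup G) := H ⧸ (M.subgroupOf H)

def ρ {H M : Subgroup G} (u : Tq H M) : G := ((u.out : H) : G)
def σ {H M : Subgroup G} (v : Sq H M) : G := ((v.out : H) : G)

lemma ρ_mem {H M : Subgroup G} (u : Tq H M) : ρ u ∈ H := (u.out).2
lemma σ_mem {H M : Subgroup G} (v : Sq H M) : σ v ∈ H := (v.out).2

lemma finite_Sq {H M : Subgroup G} (hfin : M.relIndex H ≠ 0) : Finite (Sq H M) :=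
  (Nat.card_ne_zero.mp hfin).2

lemma finite_Tq {H M : Subgroup G} (hfin : M.relIndex H ≠ 0) : Finite (Tq H M) :=
  have := finite_Sq hfin
  Finite.of_equiv _ (QuotientGroup.quotientRightRelEquivQuotientLeftRel _).symm

/-- Left translation on a left coset space. -/
def lS {Γ : Type*} [Group Γ] (N : Subgroup Γ) (b : Γ) : Γ ⧸ N ≃ Γ ⧸ N where
  toFun v := QuotientGroup.mk (b * v.out)
  invFun v := QuotientGroup.mk (b⁻¹ * v.out)
  left_inv v := by
    show (QuotientGroup.mk (b⁻¹ * (QuotientGroup.mk (b * v.out) : Γ ⧸ N).out) : Γ ⧸ N) = v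
    obtain ⟨m, hm⟩ := QuotientGroup.mk_out_eq_mul N (b * v.out)
    rw [hm, show b⁻¹ * (b * v.out * (m : Γ)) = v.out * m by group,
      QuotientGroup.mk_mul_of_mem _ m.2, QuotientGroup.out_eq']
  right_inv v := by
    show (QuotientGroup.mk (b * (QuotientGroup.mk (b⁻¹ * v.out) : Γ ⧸ N).out) : Γ ⧸ N) = v
    obtain ⟨m, hm⟩ := QuotientGroup.mk_out_eq_mul N (b⁻¹ * v.out)
    rw [hm, show b * (b⁻¹ * v.out * (m : Γ)) = v.out * m by group,
      QuotientGroup.mk_mul_of_mem _ m.2, QuotientGroup.out_eq']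

/-- Value of a right-`M`-invariant function on translated left-coset representatives. -/
lemma σ_lS {H M : Subgroup G} {X : Type*} {F : G → X}
    (hF : ∀ z : G, ∀ m ∈ M, F (z * m) = F z) (b : H) (v : Sq H M) :
    F (σ (lS (M.subgroupOf H) b v)) = F ((b : G) * σ v) := by
  obtain ⟨m, hm⟩ := QuotientGroup.mk_out_eq_mul (M.subgroupOf H) (b * v.out)
  show F (((lS (M.subgroupOf H) b v).out : H) : G) = F ((b : G) * σ v)
  have : (lS (M.subgroupOf H) b v).out = b * v.out * (m : H) := hm
  rw [this]
  have hmem : ((m : H) : G) ∈ M := (Subgroup.mem_subgroupOf).mp m.2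
  push_cast
  rw [hF _ _ hmem]
  rfl

/-- Value of a left-`M`-invariant function on translated right-coset representatives. -/
lemma ρ_rT {H M : Subgroup G} {X : Type*} {F : G → X}
    (hF : ∀ m ∈ M, ∀ z : G, F (m * z) = F z) (a : H) (u : Tq H M) :
    F (ρ (rT (M.subgroupOf H) (a : H) u)) = F (ρ u * (a : G)) := by
  obtain ⟨n, hn, hout⟩ := exists_out_mkR (M.subgroupOf H) (u.out * a)
  show F (((rT (M.subgroupOf H) a u).out : H) : G) = F (ρ u * (a : G))
  have h1 : (rT (M.subgroupOf H) a u).out = n * (u.out * a) := hout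
  rw [h1]
  have hmem : ((n : H) : G) ∈ M := (Subgroup.mem_subgroupOf).mp hn
  push_cast
  rw [hF _ hmem]
  rfl

/-- The decomposition bijection `(M\H) × (H\G) ≃ M\G`. -/
noncomputable def eD (H M : Subgroup G) (hMH : M ≤ H) : (Tq H M) × (RCos H) ≃ RCos M := by
  refine Equiv.ofBijective (fun p => mkR M (ρ p.1 * p.2.out)) ⟨?_, ?_⟩
  · rintro ⟨u, y⟩ ⟨u', y'⟩ hp
    obtain ⟨m, hm, heq⟩ := mkR_inj hp
    have hyy : y = y' := by
      have h1 : y.out * y'.out⁻¹ ∈ H := by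
        have h2 : y.out = (ρ u)⁻¹ * m * ρ u' * y'.out := by
          rw [show (ρ u)⁻¹ * m * ρ u' * y'.out = (ρ u)⁻¹ * (m * (ρ u' * y'.out)) by group,
            ← heq]
          group
        rw [h2, show (ρ u)⁻¹ * m * ρ u' * y'.out * y'.out⁻¹ = (ρ u)⁻¹ * m * ρ u' by group]
        exact H.mul_mem (H.mul_mem (H.inv_mem (ρ_mem u)) (hMH hm)) (ρ_mem u')
      have := mkR_eq h1
      rw [mkR_out, mkR_out] at this
      exact this
    subst hyy
    have huu : u = u' := by
      have h3 : ρ u = m * ρ u' := by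
        calc ρ u = ρ u * y.out * y.out⁻¹ := by group
          _ = m * (ρ u' * y.out) * y.out⁻¹ := by
              rw [show ρ u * y.out = m * (ρ u' * y.out) from heq]
          _ = m * ρ u' := by group
      have h4 : (u.out : H) * (u'.out : H)⁻¹ ∈ M.subgroupOf H := by
        rw [Subgroup.mem_subgroupOf]
        push_cast
        have : (ρ u) * (ρ u')⁻¹ = m := by rw [h3]; group
        show ρ u * (ρ u')⁻¹ ∈ M
        rw [this]; exact hm
      have := mkR_eq h4
      rw [mkR_out, mkR_out] at this
      exact this
    rw [huu]
  · intro x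
    obtain ⟨h', hh', hout⟩ := exists_out_mkR H x.out
    refine ⟨⟨mkR (M.subgroupOf H) (⟨h', hh'⟩ : H)⁻¹, mkR H x.out⟩, ?_⟩
    show mkR M (ρ (mkR (M.subgroupOf H) (⟨h', hh'⟩ : H)⁻¹) * (mkR H x.out).out) = x
    obtain ⟨n, hn, hout2⟩ := exists_out_mkR (M.subgroupOf H) (⟨h', hh'⟩ : H)⁻¹
    have h5 : ρ (mkR (M.subgroupOf H) (⟨h', hh'⟩ : H)⁻¹) = ((n : H) : G) * h'⁻¹ := by
      show (((mkR (M.subgroupOf H) (⟨h', hh'⟩ : H)⁻¹).out : H) : G) = _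
      rw [hout2]
      push_cast
      rfl
    rw [h5, hout]
    have hmem : ((n : H) : G) ∈ M := (Subgroup.mem_subgroupOf).mp hn
    have h6 : ((n : H) : G) * h'⁻¹ * (h' * x.out) = ((n : H) : G) * x.out := by group
    rw [h6]
    have h7 : mkR M (((n : H) : G) * x.out) = mkR M x.out := mkR_eq (by simpa using hmem)
    rw [h7, mkR_out]

lemma eD_out {H M : Subgroup G} (hMH : M ≤ H) {X : Type*} (φ : G → X)
    (hφ : ∀ m ∈ M, ∀ z, φ (m * z) = φ z) (p : (Tq H M) × (RCos H)) :
    φ ((eD H M hMH p).out) = φ (ρ p.1 * p.2.out) := by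
  show φ ((mkR M (ρ p.1 * p.2.out)).out) = _
  exact out_mkR_inv hφ _

/-- Coset decomposition of sums over `M\G`. -/
lemma decompE {H M : Subgroup G} (hMH : M ≤ H) (φ : G → ℝ≥0∞)
    (hφ : ∀ m ∈ M, ∀ z, φ (m * z) = φ z) :
    ∑' x : RCos M, φ x.out = ∑' u : Tq H M, ∑' y : RCos H, φ (ρ u * y.out) := by
  rw [← Equiv.tsum_eq (eD H M hMH) (fun x : RCos M => φ x.out)]
  rw [← ENNReal.tsum_prod]
  exact tsum_congr fun p => eD_out hMH φ hφ p

end HeckeAux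
namespace HeckeAux
open HeckeRDPaper ENNReal

variable {G : Type*} [Group G]

lemma tsum_const_fin {ι : Type*} [Finite ι] (c : ℝ≥0∞) :
    ∑' _ : ι, c = (Nat.card ι) * c := by
  have := Fintype.ofFinite ι
  rw [tsum_fintype, Finset.sum_const, Nat.card_eq_fintype_card, nsmul_eq_mul]
  simp

section Split
variable {H M : Subgroup G}

lemma E2_split (hMH : M ≤ H) (hfin : M.relIndex H ≠ 0) {ψ : G → ℝ} (hψ : ∀ h ∈ H, ∀ z, ψ (h * z) = ψ z) :
    E2 M ψ = (Nat.card (Tq H M)) * E2 H ψ := by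
  have := finite_Tq hfin
  have h1 : ∀ u : Tq H M, (∑' y : RCos H, (ENNReal.ofReal (ψ (ρ u * y.out))) ^ 2) = E2 H ψ := by
    intro u
    exact tsum_congr fun y => by rw [hψ (ρ u) (ρ_mem u) y.out]
  calc E2 M ψ = ∑' u : Tq H M, ∑' y : RCos H, (ENNReal.ofReal (ψ (ρ u * y.out))) ^ 2 :=
        decompE hMH (fun w => (ENNReal.ofReal (ψ w)) ^ 2)
          (fun m hm z => by
            show (ENNReal.ofReal (ψ (m * z))) ^ 2 = (ENNReal.ofReal (ψ z)) ^ 2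
            rw [hψ m (hMH hm) z])
    _ = ∑' _ : Tq H M, E2 H ψ := tsum_congr h1
    _ = (Nat.card (Tq H M)) * E2 H ψ := tsum_const_fin _

lemma EC_split (hMH : M ≤ H) (hfin : M.relIndex H ≠ 0) {f k : G → ℝ} (hfl : ∀ h ∈ H, ∀ z, f (h * z) = f z)
    (hfr : ∀ h ∈ H, ∀ z, f (z * h) = f z) (hkl : ∀ h ∈ H, ∀ z, k (h * z) = k z) (z : G) :
    EC M f k z = (Nat.card (Tq H M)) * EC H f k z := by
  have := finite_Tq hfin
  have hφ : ∀ m ∈ M, ∀ w : G,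
      (fun w => ENNReal.ofReal (f (z * w⁻¹)) * ENNReal.ofReal (k w)) (m * w) =
      (fun w => ENNReal.ofReal (f (z * w⁻¹)) * ENNReal.ofReal (k w)) w := by
    intro m hm w
    simp only
    rw [show z * (m * w)⁻¹ = (z * w⁻¹) * m⁻¹ by group, hfr m⁻¹ (H.inv_mem (hMH hm)),
      hkl m (hMH hm)]
  have h1 : ∀ u : Tq H M, (∑' y : RCos H,
      ENNReal.ofReal (f (z * (ρ u * y.out)⁻¹)) * ENNReal.ofReal (k (ρ u * y.out)))
      = EC H f k z := by
    intro u
    refine tsum_congr fun y => ?_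
    rw [show z * (ρ u * y.out)⁻¹ = (z * y.out⁻¹) * (ρ u)⁻¹ by group,
      hfr (ρ u)⁻¹ (H.inv_mem (ρ_mem u)), hkl (ρ u) (ρ_mem u)]
  calc EC M f k z = ∑' u : Tq H M, ∑' y : RCos H,
        ENNReal.ofReal (f (z * (ρ u * y.out)⁻¹)) * ENNReal.ofReal (k (ρ u * y.out)) :=
        decompE hMH (fun w => ENNReal.ofReal (f (z * w⁻¹)) * ENNReal.ofReal (k w)) hφ
    _ = ∑' _ : Tq H M, EC H f k z := tsum_congr h1
    _ = (Nat.card (Tq H M)) * EC H f k z := tsum_const_fin _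

lemma finDosetSupp_down (hfin : M.relIndex H ≠ 0) {f : G → ℝ} (hFD : FinDosetSupp H f) : FinDosetSupp M f := by
  classical
  have hT := finite_Tq hfin
  have hS := finite_Sq hfin
  obtain ⟨C, hCfin, hCsupp, -⟩ := supp_subset_Dsets hFD
  have hsub : {s : Set G | ∃ z : G, f z ≠ 0 ∧ s = Dset M z} ⊆
      ⋃ c ∈ C, Set.range (fun p : Tq H M × Sq H M => Dset M (ρ p.1 * c * σ p.2)) := by
    rintro s ⟨z, hz, rfl⟩
    obtain ⟨c, hc, h₁, hh₁, h₂, hh₂, hzeq⟩ := hCsupp z hz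
    refine Set.mem_biUnion hc ?_
    refine ⟨(mkR (M.subgroupOf H) (⟨h₁, hh₁⟩ : H), QuotientGroup.mk (⟨h₂, hh₂⟩ : H)), ?_⟩
    simp only
    obtain ⟨n, hn, hout⟩ := exists_out_mkR (M.subgroupOf H) (⟨h₁, hh₁⟩ : H)
    obtain ⟨m, hm⟩ := QuotientGroup.mk_out_eq_mul (M.subgroupOf H) (⟨h₂, hh₂⟩ : H)
    have hρ : ρ (mkR (M.subgroupOf H) (⟨h₁, hh₁⟩ : H)) = ((n : H) : G) * h₁ := by
      show (((mkR (M.subgroupOf H) (⟨h₁, hh₁⟩ : H)).out : H) : G) = _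
      rw [hout]; push_cast; rfl
    have hσ : σ (QuotientGroup.mk (⟨h₂, hh₂⟩ : H) : Sq H M) = h₂ * ((m : H) : G) := by
      show (((QuotientGroup.mk (⟨h₂, hh₂⟩ : H) : Sq H M).out : H) : G) = _
      rw [hm]; push_cast; rfl
    have hnM : ((n : H) : G) ∈ M := (Subgroup.mem_subgroupOf).mp hn
    have hmM : ((m : H) : G) ∈ M := (Subgroup.mem_subgroupOf).mp m.2
    rw [hρ, hσ]
    have : ((n : H) : G) * h₁ * c * (h₂ * ((m : H) : G)) =
        ((n : H) : G) * z * ((m : H) : G) := by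
      rw [hzeq]; group
    rw [this]
    -- Dset M (n z m) = Dset M z
    ext y
    constructor
    · rintro ⟨a, ha, b, hb, rfl⟩
      exact ⟨a * ((n : H) : G), M.mul_mem ha hnM, ((m : H) : G) * b, M.mul_mem hmM hb,
        by group⟩
    · rintro ⟨a, ha, b, hb, rfl⟩
      exact ⟨a * ((n : H) : G)⁻¹, M.mul_mem ha (M.inv_mem hnM),
        ((m : H) : G)⁻¹ * b, M.mul_mem (M.inv_mem hmM) hb, by group⟩
  exact Set.Finite.subset (hCfin.biUnion fun c _ => Set.finite_range _) hsub

end Split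

/-- Transfer of property (RD) from a finite-index subgroup up. -/
lemma transfer_up (H M : Subgroup G) (hMH : M ≤ H) (hfin : M.relIndex H ≠ 0)
    (hANH : AlmostNormal H) (hANM : AlmostNormal M) (L : G → ℝ)
    (hRD : HeckeRDwrt M L) : HeckeRDwrt H L := by
  classical
  obtain ⟨P, hP⟩ := hRD
  set n : ℕ := Nat.card (Tq H M) with hn
  have hT := finite_Tq hfin
  have hTne : Nonempty (Tq H M) := ⟨mkR _ 1⟩
  have hn1 : 1 ≤ n := Nat.one_le_iff_ne_zero.mpr (Nat.card_ne_zero.mpr ⟨hTne, hT⟩)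
  have hn1E : (1 : ℝ≥0∞) ≤ (n : ℝ≥0∞) := by exact_mod_cast hn1
  refine ⟨Polynomial.C (n : ℝ) * (P * P + 1), ?_⟩
  intro r hr f k h0f hbif hFDf hsupp h0k hinvk hsumk
  -- invariances
  have hfl : ∀ h ∈ H, ∀ z, f (h * z) = f z := fun h hh z => by
    simpa [mul_one] using hbif z h hh 1 H.one_mem
  have hfr : ∀ h ∈ H, ∀ z, f (z * h) = f z := fun h hh z => by
    simpa [one_mul] using hbif z 1 H.one_mem h hh
  have hkl : ∀ h ∈ H, ∀ z, k (h * z) = k z := fun h hh z => hinvk z h hh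
  -- hypotheses for the pair (G, M)
  have hbifM : ∀ z : G, ∀ h₁ ∈ M, ∀ h₂ ∈ M, f (h₁ * z * h₂) = f z :=
    fun z h₁ hh₁ h₂ hh₂ => hbif z h₁ (hMH hh₁) h₂ (hMH hh₂)
  have hFDfM : FinDosetSupp M f := finDosetSupp_down hfin hFDf
  have hE2Hk : E2 H k ≠ ⊤ := (E2_ne_top_iff h0k).mpr hsumk
  have hE2Mk : E2 M k ≠ ⊤ := by
    rw [E2_split hMH hfin hkl]
    exact ENNReal.mul_ne_top (ENNReal.natCast_ne_top n) hE2Hk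
  have hsumkM : Summable (fun x : RCos M => k x.out ^ 2) := (E2_ne_top_iff h0k).mp hE2Mk
  have hinvkM : ∀ z : G, ∀ h ∈ M, k (h * z) = k z := fun z h hh => hinvk z h (hMH hh)
  have key := hP r hr f k h0f hbifM hFDfM hsupp h0k hinvkM hsumkM
  -- a priori square-summability of the M-convolution
  have hECne : ∑' z : RCos M, (EC M f k z.out) ^ 2 ≠ ⊤ :=
    EC_sq_tsum_ne_top M hANM h0f hbifM hFDfM h0k hE2Mk
  have hconvle : ∀ z : G, ENNReal.ofReal (conv M f k z) ≤ EC M f k z :=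
    ofReal_conv_le_EC h0f h0k
  have hE2Mconv_ne : E2 M (conv M f k) ≠ ⊤ := by
    refine ne_top_of_le_ne_top hECne (ENNReal.tsum_le_tsum fun z => ?_)
    exact pow_le_pow_left' (hconvle z.out) 2
  -- the H-convolution is controlled by the M-convolution
  obtain ⟨dM, hdM⟩ := supp_left_card M hANM hFDfM
  have hECeq : ∀ z : G, ENNReal.ofReal (conv M f k z) = EC M f k z :=
    fun z => ofReal_conv_eq_EC h0f h0k z (hdM z).1
  have hstep : ∀ z : G, ENNReal.ofReal (conv H f k z) ≤ EC M f k z := by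
    intro z
    refine le_trans (ofReal_conv_le_EC h0f h0k z) ?_
    rw [EC_split hMH hfin hfl hfr hkl z]
    calc EC H f k z = 1 * EC H f k z := (one_mul _).symm
      _ ≤ (n : ℝ≥0∞) * EC H f k z := mul_le_mul_left hn1E _
  -- conv M f k is left-H-invariant
  have hconvHinv : ∀ h ∈ H, ∀ z, conv M f k (h * z) = conv M f k z := by
    intro h hh z
    rw [conv, conv]
    refine tsum_congr fun x => ?_
    rw [show h * z * x.out⁻¹ = h * (z * x.out⁻¹) by group, hfl h hh]
  have hsplitconv : E2 M (conv M f k) =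
      (n : ℝ≥0∞) * ∑' y : RCos H, (ENNReal.ofReal (conv M f k y.out)) ^ 2 :=
    E2_split hMH hfin hconvHinv
  have hA : E2 H (conv H f k) ≤ E2 M (conv M f k) := by
    calc E2 H (conv H f k) ≤ ∑' y : RCos H, (EC M f k y.out) ^ 2 :=
          ENNReal.tsum_le_tsum fun y => pow_le_pow_left' (hstep y.out) 2
      _ = ∑' y : RCos H, (ENNReal.ofReal (conv M f k y.out)) ^ 2 :=
          tsum_congr fun y => by rw [hECeq y.out]
      _ ≤ (n : ℝ≥0∞) * ∑' y : RCos H, (ENNReal.ofReal (conv M f k y.out)) ^ 2 := by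
          nth_rewrite 1 [← one_mul (∑' y : RCos H, (ENNReal.ofReal (conv M f k y.out)) ^ 2)]
          exact mul_le_mul_left hn1E _
      _ = E2 M (conv M f k) := hsplitconv.symm
  -- convert the RD bound into ℝ≥0∞
  set Qr : ℝ := (P * P + 1).eval r with hQr
  have hQr0 : 0 ≤ Qr := by
    rw [hQr]
    simp only [Polynomial.eval_add, Polynomial.eval_mul, Polynomial.eval_one]
    nlinarith [sq_nonneg (P.eval r)]
  have hQrP : P.eval r ≤ Qr := by
    rw [hQr]
    simp only [Polynomial.eval_add, Polynomial.eval_mul, Polynomial.eval_one]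
    nlinarith [sq_nonneg (P.eval r - 1)]
  have hl2nn : 0 ≤ l2 M f * l2 M k := mul_nonneg (Real.sqrt_nonneg _) (Real.sqrt_nonneg _)
  have key2 : l2 M (conv M f k) ≤ Qr * (l2 M f * l2 M k) := by
    calc l2 M (conv M f k) ≤ P.eval r * l2 M f * l2 M k := key
      _ = P.eval r * (l2 M f * l2 M k) := by ring
      _ ≤ Qr * (l2 M f * l2 M k) := mul_le_mul_of_nonneg_right hQrP hl2nn
  have hE2Mf_ne : E2 M f ≠ ⊤ := by
    rw [E2_split hMH hfin hfl]
    exact ENNReal.mul_ne_top (ENNReal.natCast_ne_top n) (E2_ne_top_of_findoset H hANH hFDf)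
  have hconvMnn := conv_nonneg' (N := M) h0f h0k
  have hconvHnn := conv_nonneg' (N := H) h0f h0k
  have hl2cnn : 0 ≤ l2 M (conv M f k) := Real.sqrt_nonneg _
  have h6 : l2 M (conv M f k) ^ 2 ≤ (Qr * (l2 M f * l2 M k)) ^ 2 :=
    pow_le_pow_left₀ hl2cnn key2 2
  have hofReal_c : ENNReal.ofReal (((n : ℝ) * Qr) ^ 2) =
      (n : ℝ≥0∞) ^ 2 * ENNReal.ofReal (Qr ^ 2) := by
    rw [mul_pow, ENNReal.ofReal_mul (by positivity), ENNReal.ofReal_pow (by positivity),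
      ENNReal.ofReal_natCast]
  have hEbound : E2 M (conv M f k) ≤ ENNReal.ofReal (Qr ^ 2) * E2 M f * E2 M k := by
    rw [E2_eq_ofReal_l2_sq hconvMnn hE2Mconv_ne, E2_eq_ofReal_l2_sq h0f hE2Mf_ne,
      E2_eq_ofReal_l2_sq h0k hE2Mk]
    calc ENNReal.ofReal (l2 M (conv M f k) ^ 2)
        ≤ ENNReal.ofReal ((Qr * (l2 M f * l2 M k)) ^ 2) := ENNReal.ofReal_le_ofReal h6
      _ = ENNReal.ofReal (Qr ^ 2) * ENNReal.ofReal (l2 M f ^ 2) *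
          ENNReal.ofReal (l2 M k ^ 2) := by
          rw [show (Qr * (l2 M f * l2 M k)) ^ 2 = Qr ^ 2 * (l2 M f ^ 2 * l2 M k ^ 2) by ring,
            ENNReal.ofReal_mul (sq_nonneg Qr),
            ENNReal.ofReal_mul (sq_nonneg (l2 M f)), mul_assoc]
  have hE2Hf_ne : E2 H f ≠ ⊤ := E2_ne_top_of_findoset H hANH hFDf
  have hfinal : E2 H (conv H f k) ≤
      ENNReal.ofReal (((n : ℝ) * Qr) ^ 2) * E2 H f * E2 H k := by
    refine le_trans (hA.trans hEbound) ?_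
    rw [E2_split hMH hfin hfl, E2_split hMH hfin hkl, hofReal_c]
    exact le_of_eq (by ring)
  have hconc := l2_le_of_E2_le (N := H) hconvHnn h0f h0k
    (c := (n : ℝ) * Qr) (by positivity) hE2Hf_ne hE2Hk hfinal
  calc l2 H (conv H f k) ≤ ((n : ℝ) * Qr) * l2 H f * l2 H k := hconc
    _ = (Polynomial.C (n : ℝ) * (P * P + 1)).eval r * l2 H f * l2 H k := by
        rw [Polynomial.eval_mul, Polynomial.eval_C, hQr]
end HeckeAux
namespace HeckeAux
open HeckeRDPaper ENNReal

variable {G : Type*} [Group G]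

section Down
variable {H M : Subgroup G}

lemma tsum_split (hMH : M ≤ H) (hfin : M.relIndex H ≠ 0) (φ : G → ℝ≥0∞)
    (hφ : ∀ h ∈ H, ∀ z, φ (h * z) = φ z) :
    ∑' x : RCos M, φ x.out = (Nat.card (Tq H M)) * ∑' y : RCos H, φ y.out := by
  have := finite_Tq hfin
  have h1 : ∀ u : Tq H M, (∑' y : RCos H, φ (ρ u * y.out)) = ∑' y : RCos H, φ y.out :=
    fun u => tsum_congr fun y => hφ (ρ u) (ρ_mem u) y.out
  calc ∑' x : RCos M, φ x.out = ∑' u : Tq H M, ∑' y : RCos H, φ (ρ u * y.out) :=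
        decompE hMH φ (fun m hm z => hφ m (hMH hm) z)
    _ = ∑' _ : Tq H M, ∑' y : RCos H, φ y.out := tsum_congr h1
    _ = (Nat.card (Tq H M)) * ∑' y : RCos H, φ y.out := tsum_const_fin _

lemma tsum_out_mul_le (hMH : M ≤ H) {φ : G → ℝ≥0∞}
    (hφM : ∀ m ∈ M, ∀ z, φ (m * z) = φ z) (u : Tq H M) :
    ∑' y : RCos H, φ (ρ u * y.out) ≤ ∑' x : RCos M, φ x.out := by
  have hinj : Function.Injective (fun y : RCos H => mkR M (ρ u * y.out)) := by
    intro a b hab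
    obtain ⟨m, hm, heq⟩ := mkR_inj hab
    have h1 : a.out * b.out⁻¹ ∈ H := by
      have h2 : a.out = (ρ u)⁻¹ * m * ρ u * b.out := by
        rw [show (ρ u)⁻¹ * m * ρ u * b.out = (ρ u)⁻¹ * (m * (ρ u * b.out)) by group, ← heq]
        group
      rw [h2, show (ρ u)⁻¹ * m * ρ u * b.out * b.out⁻¹ = (ρ u)⁻¹ * m * ρ u by group]
      exact H.mul_mem (H.mul_mem (H.inv_mem (ρ_mem u)) (hMH hm)) (ρ_mem u)
    have := mkR_eq h1
    rwa [mkR_out, mkR_out] at this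
  calc ∑' y : RCos H, φ (ρ u * y.out)
      = ∑' y : RCos H, φ ((mkR M (ρ u * y.out)).out) :=
        tsum_congr fun y => (out_mkR_inv hφM _).symm
    _ ≤ ∑' x : RCos M, φ x.out :=
        tsum_comp_le_tsum_of_injective hinj (fun x : RCos M => φ x.out)

lemma tsum_out_mulr (c : G) {φ : G → ℝ≥0∞} (hφM : ∀ m ∈ M, ∀ z, φ (m * z) = φ z) :
    ∑' x : RCos M, φ (x.out * c) = ∑' x : RCos M, φ x.out := by
  calc ∑' x : RCos M, φ (x.out * c)
      = ∑' x : RCos M, φ ((rT M c x).out) := tsum_congr fun x => (out_mkR_inv hφM _).symm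
    _ = ∑' x : RCos M, φ x.out := Equiv.tsum_eq (rT M c) (fun x : RCos M => φ x.out)

/-- Transfer of property (RD) from `H` down to a finite-index subgroup `M`. -/
lemma transfer_down (hMH : M ≤ H) (hfin : M.relIndex H ≠ 0)
    (hANH : AlmostNormal H) (hANM : AlmostNormal M) (L : G → ℝ) (hL : IsLengthFunction L)
    (hLH : ∀ h ∈ H, L h = 0) (hRD : HeckeRDwrt H L) : HeckeRDwrt M L := by
  classical
  obtain ⟨P, hP⟩ := hRD
  have hTfin := finite_Tq hfin
  have hSfin := finite_Sq hfin
  have hTft := Fintype.ofFinite (Tq H M)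
  have hSft := Fintype.ofFinite (Sq H M)
  set nT : ℕ := Nat.card (Tq H M) with hnT
  set nS : ℕ := Nat.card (Sq H M) with hnS
  set cst : ℕ := nT * (4 * nT * nS * (nT * nS)) * (2 * nT * nT) with hcst
  refine ⟨Polynomial.C (Real.sqrt (cst : ℝ)) * (P * P + 1), ?_⟩
  intro r hr f k h0f hbif hFDf hsupp h0k hinvk hsumk
  have hfl : ∀ m ∈ M, ∀ z, f (m * z) = f z := fun m hm z => by
    simpa [mul_one] using hbif z m hm 1 M.one_mem
  have hfr : ∀ m ∈ M, ∀ z, f (z * m) = f z := fun m hm z => by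
    simpa [one_mul] using hbif z 1 M.one_mem m hm
  set f' : G → ℝ := fun z => ∑ u : Tq H M, ∑ v : Sq H M, f (ρ u * z * σ v) with hf'def
  set k' : G → ℝ := fun z => ∑ u : Tq H M, k (ρ u * z) with hk'def
  have h0f' : ∀ z, 0 ≤ f' z :=
    fun z => Finset.sum_nonneg fun u _ => Finset.sum_nonneg fun v _ => h0f _
  have h0k' : ∀ z, 0 ≤ k' z := fun z => Finset.sum_nonneg fun u _ => h0k _
  -- bi-invariance of f'
  have hbif' : ∀ z : G, ∀ a ∈ H, ∀ b ∈ H, f' (a * z * b) = f' z := by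
    intro z a ha b hb
    have hinner : ∀ w : G, (∑ v : Sq H M, f (w * (a * z * b) * σ v)) =
        ∑ v : Sq H M, f ((w * a * z) * σ v) := by
      intro w
      have hF : ∀ t : G, ∀ m : G, m ∈ M → f (w * a * z * (t * m)) = f (w * a * z * t) := by
        intro t m hm
        rw [show w * a * z * (t * m) = (w * a * z * t) * m by group]
        exact hfr m hm _
      calc (∑ v : Sq H M, f (w * (a * z * b) * σ v))
          = ∑ v : Sq H M, f (w * a * z * ((⟨b, hb⟩ : H) * σ v)) := by
            refine Finset.sum_congr rfl fun v _ => ?_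
            congr 1
            group
        _ = ∑ v : Sq H M, f (w * a * z * σ (lS (M.subgroupOf H) ⟨b, hb⟩ v)) := by
            refine Finset.sum_congr rfl fun v _ => ?_
            exact (σ_lS (F := fun t => f (w * a * z * t)) (fun t m hm => hF t m hm)
              ⟨b, hb⟩ v).symm
        _ = ∑ v : Sq H M, f (w * a * z * σ v) :=
            Equiv.sum_comp (lS (M.subgroupOf H) (⟨b, hb⟩ : H))
              (fun v => f (w * a * z * σ v))
        _ = ∑ v : Sq H M, f ((w * a * z) * σ v) := rfl
    have hF2 : ∀ m : G, m ∈ M → ∀ t : G,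
        (∑ v : Sq H M, f ((m * t) * z * σ v)) = ∑ v : Sq H M, f (t * z * σ v) := by
      intro m hm t
      refine Finset.sum_congr rfl fun v _ => ?_
      rw [show (m * t) * z * σ v = m * (t * z * σ v) by group]
      exact hfl m hm _
    calc f' (a * z * b) = ∑ u : Tq H M, ∑ v : Sq H M, f (ρ u * (a * z * b) * σ v) := rfl
      _ = ∑ u : Tq H M, ∑ v : Sq H M, f ((ρ u * a) * z * σ v) := by
          refine Finset.sum_congr rfl fun u _ => ?_
          exact hinner (ρ u)
      _ = ∑ u : Tq H M, ∑ v : Sq H M, f (ρ (rT (M.subgroupOf H) (⟨a, ha⟩ : H) u) * z * σ v) := by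
          refine Finset.sum_congr rfl fun u _ => ?_
          exact (ρ_rT (F := fun t => ∑ v : Sq H M, f (t * z * σ v)) hF2 ⟨a, ha⟩ u).symm
      _ = ∑ u : Tq H M, ∑ v : Sq H M, f (ρ u * z * σ v) :=
          Equiv.sum_comp (rT (M.subgroupOf H) (⟨a, ha⟩ : H))
            (fun u => ∑ v : Sq H M, f (ρ u * z * σ v))
  have hfl' : ∀ h ∈ H, ∀ z, f' (h * z) = f' z := fun h hh z => by
    simpa [mul_one] using hbif' z h hh 1 H.one_mem
  -- finite doset support of f'
  have hFDf' : FinDosetSupp H f' := by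
    have hsub : {s : Set G | ∃ z : G, f' z ≠ 0 ∧ s = Dset H z} ⊆
        (fun s : Set G => {y : G | ∃ a ∈ H, ∃ b ∈ H, ∃ w ∈ s, y = a * w * b}) ''
          {s : Set G | ∃ z : G, f z ≠ 0 ∧ s = Dset M z} := by
      rintro s ⟨z, hz, rfl⟩
      have hex : ∃ u : Tq H M, (∑ v : Sq H M, f (ρ u * z * σ v)) ≠ 0 := by
        by_contra hc
        push_neg at hc
        exact hz (by simp [hf'def, hc])
      obtain ⟨u, hu⟩ := hex
      obtain ⟨v, -, hv⟩ := Finset.exists_ne_zero_of_sum_ne_zero hu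
      set w : G := ρ u * z * σ v with hw
      refine ⟨Dset M w, ⟨w, hv, rfl⟩, ?_⟩
      ext y
      constructor
      · rintro ⟨a, ha, b, hb, w', ⟨m₁, hm₁, m₂, hm₂, rfl⟩, rfl⟩
        exact ⟨a * m₁ * ρ u, H.mul_mem (H.mul_mem ha (hMH hm₁)) (ρ_mem u),
          σ v * m₂ * b, H.mul_mem (H.mul_mem (σ_mem v) (hMH hm₂)) hb, by rw [hw]; group⟩
      · rintro ⟨a, ha, b, hb, rfl⟩
        exact ⟨a * (ρ u)⁻¹, H.mul_mem ha (H.inv_mem (ρ_mem u)), (σ v)⁻¹ * b,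
          H.mul_mem (H.inv_mem (σ_mem v)) hb, w, self_mem_Dset M w, by rw [hw]; group⟩
    exact Set.Finite.subset (Set.Finite.image _ hFDf) hsub
  -- length bound on the support of f'
  have hsupp' : ∀ z, f' z ≠ 0 → L z ≤ r := by
    intro z hz
    have hex : ∃ u : Tq H M, (∑ v : Sq H M, f (ρ u * z * σ v)) ≠ 0 := by
      by_contra hc
      push_neg at hc
      exact hz (by simp [hf'def, hc])
    obtain ⟨u, hu⟩ := hex
    obtain ⟨v, -, hv⟩ := Finset.exists_ne_zero_of_sum_ne_zero hu
    have h1 : L (ρ u * z * σ v) ≤ r := hsupp _ hv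
    have h2 : L z ≤ L (ρ u)⁻¹ + L (ρ u * z * σ v) + L (σ v)⁻¹ := by
      calc L z = L ((ρ u)⁻¹ * (ρ u * z * σ v) * (σ v)⁻¹) := by congr 1; group
        _ ≤ L ((ρ u)⁻¹ * (ρ u * z * σ v)) + L (σ v)⁻¹ := hL.subadd _ _
        _ ≤ L (ρ u)⁻¹ + L (ρ u * z * σ v) + L (σ v)⁻¹ := by
            have := hL.subadd (ρ u)⁻¹ (ρ u * z * σ v); linarith
    rw [hL.map_inv, hL.map_inv, hLH _ (ρ_mem u), hLH _ (σ_mem v)] at h2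
    linarith
  -- left H-invariance of k'
  have hinvk' : ∀ z : G, ∀ a ∈ H, k' (a * z) = k' z := by
    intro z a ha
    have hF2 : ∀ m : G, m ∈ M → ∀ t : G, k ((m * t) * z) = k (t * z) := by
      intro m hm t
      rw [show (m * t) * z = m * (t * z) by group]
      exact hinvk _ m hm
    calc k' (a * z) = ∑ u : Tq H M, k (ρ u * (a * z)) := rfl
      _ = ∑ u : Tq H M, k ((ρ u * a) * z) := by
          refine Finset.sum_congr rfl fun u _ => ?_
          congr 1
          group
      _ = ∑ u : Tq H M, k (ρ (rT (M.subgroupOf H) (⟨a, ha⟩ : H) u) * z) := by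
          refine Finset.sum_congr rfl fun u _ => ?_
          exact (ρ_rT (F := fun t => k (t * z)) hF2 ⟨a, ha⟩ u).symm
      _ = ∑ u : Tq H M, k (ρ u * z) :=
          Equiv.sum_comp (rT (M.subgroupOf H) (⟨a, ha⟩ : H)) (fun u => k (ρ u * z))
  -- ℓ² bounds for k' and f'
  have hkM : ∀ m ∈ M, ∀ z, k (m * z) = k z := fun m hm z => hinvk z m hm
  have hE2Mk : E2 M k ≠ ⊤ := (E2_ne_top_iff h0k).mpr hsumk
  have hE2Mf : E2 M f ≠ ⊤ := E2_ne_top_of_findoset M hANM hFDf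
  have hcardT : (Finset.univ : Finset (Tq H M)).card = nT := by
    rw [hnT, Nat.card_eq_fintype_card]; rfl
  have hcardS : (Finset.univ : Finset (Sq H M)).card = nS := by
    rw [hnS, Nat.card_eq_fintype_card]; rfl
  have hk'le : E2 H k' ≤ (2 * nT * nT : ℕ) * E2 M k := by
    have hterm : ∀ y : RCos H, (ENNReal.ofReal (k' y.out)) ^ 2 ≤
        (2 * nT : ℕ) * ∑ u : Tq H M, (ENNReal.ofReal (k (ρ u * y.out))) ^ 2 := by
      intro y
      have h1 : ENNReal.ofReal (k' y.out) =
          ∑ u : Tq H M, ENNReal.ofReal (k (ρ u * y.out)) :=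
        ENNReal.ofReal_sum_of_nonneg (fun u _ => h0k _)
      rw [h1]
      refine le_trans (sq_finsum_le _ _) ?_
      rw [hcardT]
      exact le_of_eq (by push_cast; ring)
    calc E2 H k' ≤ ∑' y : RCos H, (2 * nT : ℕ) *
          ∑ u : Tq H M, (ENNReal.ofReal (k (ρ u * y.out))) ^ 2 :=
          ENNReal.tsum_le_tsum hterm
      _ = (2 * nT : ℕ) * ∑' y : RCos H, ∑ u : Tq H M,
            (ENNReal.ofReal (k (ρ u * y.out))) ^ 2 := ENNReal.tsum_mul_left
      _ = (2 * nT : ℕ) * ∑ u : Tq H M, ∑' y : RCos H,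
            (ENNReal.ofReal (k (ρ u * y.out))) ^ 2 := by
          rw [Summable.tsum_finsetSum (fun u _ => ENNReal.summable)]
      _ ≤ (2 * nT : ℕ) * ∑ u : Tq H M, E2 M k := by
          refine mul_le_mul_right (Finset.sum_le_sum fun u _ => ?_) _
          exact tsum_out_mul_le hMH (φ := fun z => (ENNReal.ofReal (k z)) ^ 2)
            (fun m hm z => by
              show (ENNReal.ofReal (k (m * z))) ^ 2 = (ENNReal.ofReal (k z)) ^ 2
              rw [hkM m hm z]) u
      _ = (2 * nT * nT : ℕ) * E2 M k := by
          rw [Finset.sum_const, hcardT, nsmul_eq_mul]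
          push_cast
          ring
  have hE2Hk' : E2 H k' ≠ ⊤ := ne_top_of_le_ne_top
    (ENNReal.mul_ne_top (ENNReal.natCast_ne_top _) hE2Mk) hk'le
  have hsumk' : Summable (fun y : RCos H => k' y.out ^ 2) := (E2_ne_top_iff h0k').mp hE2Hk'
  have hf'le : E2 H f' ≤ (4 * nT * nS * (nT * nS) : ℕ) * E2 M f := by
    have hterm : ∀ y : RCos H, (ENNReal.ofReal (f' y.out)) ^ 2 ≤
        (4 * nT * nS : ℕ) * ∑ u : Tq H M, ∑ v : Sq H M,
          (ENNReal.ofReal (f (ρ u * y.out * σ v))) ^ 2 := by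
      intro y
      have h1 : ENNReal.ofReal (f' y.out) =
          ∑ u : Tq H M, ∑ v : Sq H M, ENNReal.ofReal (f (ρ u * y.out * σ v)) := by
        rw [ENNReal.ofReal_sum_of_nonneg (fun u _ => Finset.sum_nonneg fun v _ => h0f _)]
        exact Finset.sum_congr rfl fun u _ => ENNReal.ofReal_sum_of_nonneg (fun v _ => h0f _)
      rw [h1]
      refine le_trans (sq_finsum_le _ _) ?_
      rw [hcardT]
      have h2 : ∀ u : Tq H M, (∑ v : Sq H M, ENNReal.ofReal (f (ρ u * y.out * σ v))) ^ 2 ≤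
          (2 * nS : ℕ) * ∑ v : Sq H M, (ENNReal.ofReal (f (ρ u * y.out * σ v))) ^ 2 := by
        intro u
        refine le_trans (sq_finsum_le _ _) ?_
        rw [hcardS]
        exact le_of_eq (by push_cast; ring)
      calc (2 * nT : ℝ≥0∞) * ∑ u : Tq H M,
            (∑ v : Sq H M, ENNReal.ofReal (f (ρ u * y.out * σ v))) ^ 2
          ≤ (2 * nT : ℝ≥0∞) * ∑ u : Tq H M, (2 * nS : ℕ) *
              ∑ v : Sq H M, (ENNReal.ofReal (f (ρ u * y.out * σ v))) ^ 2 :=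
            mul_le_mul_right (Finset.sum_le_sum fun u _ => h2 u) _
        _ = (4 * nT * nS : ℕ) * ∑ u : Tq H M, ∑ v : Sq H M,
              (ENNReal.ofReal (f (ρ u * y.out * σ v))) ^ 2 := by
            rw [← Finset.mul_sum]
            push_cast
            ring
    calc E2 H f' ≤ ∑' y : RCos H, (4 * nT * nS : ℕ) * ∑ u : Tq H M, ∑ v : Sq H M,
          (ENNReal.ofReal (f (ρ u * y.out * σ v))) ^ 2 := ENNReal.tsum_le_tsum hterm
      _ = (4 * nT * nS : ℕ) * ∑' y : RCos H, ∑ u : Tq H M, ∑ v : Sq H M,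
            (ENNReal.ofReal (f (ρ u * y.out * σ v))) ^ 2 := ENNReal.tsum_mul_left
      _ = (4 * nT * nS : ℕ) * ∑ u : Tq H M, ∑ v : Sq H M, ∑' y : RCos H,
            (ENNReal.ofReal (f (ρ u * y.out * σ v))) ^ 2 := by
          rw [Summable.tsum_finsetSum (fun u _ => ENNReal.summable)]
          congr 1
          exact Finset.sum_congr rfl fun u _ => Summable.tsum_finsetSum (fun v _ => ENNReal.summable)
      _ ≤ (4 * nT * nS : ℕ) * ∑ u : Tq H M, ∑ v : Sq H M, E2 M f := by
          refine mul_le_mul_right (Finset.sum_le_sum fun u _ =>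
            Finset.sum_le_sum fun v _ => ?_) _
          have hstep1 : ∑' y : RCos H, (ENNReal.ofReal (f (ρ u * y.out * σ v))) ^ 2 ≤
              ∑' x : RCos M, (ENNReal.ofReal (f (x.out * σ v))) ^ 2 := by
            have := tsum_out_mul_le hMH
              (φ := fun z => (ENNReal.ofReal (f (z * σ v))) ^ 2)
              (fun m hm z => by
                show (ENNReal.ofReal (f (m * z * σ v))) ^ 2 = _
                rw [show m * z * σ v = m * (z * σ v) by group, hfl m hm]) u
            exact this
          refine le_trans hstep1 (le_of_eq ?_)
          exact tsum_out_mulr (M := M) (σ v) (φ := fun z => (ENNReal.ofReal (f z)) ^ 2)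
            (fun m hm z => by
              show (ENNReal.ofReal (f (m * z))) ^ 2 = (ENNReal.ofReal (f z)) ^ 2
              rw [hfl m hm z])
      _ = (4 * nT * nS * (nT * nS) : ℕ) * E2 M f := by
          simp only [Finset.sum_const, nsmul_eq_mul, hcardS, hcardT]
          push_cast
          ring
  have hE2Hf' : E2 H f' ≠ ⊤ := ne_top_of_le_ne_top
    (ENNReal.mul_ne_top (ENNReal.natCast_ne_top _) hE2Mf) hf'le
  -- apply RD for (G, H)
  have key := hP r hr f' k' h0f' hbif' hFDf' hsupp' h0k'
    (fun z a ha => hinvk' z a ha) hsumk'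
  set Qr : ℝ := (P * P + 1).eval r with hQr
  have hQr0 : 0 ≤ Qr := by
    rw [hQr]
    simp only [Polynomial.eval_add, Polynomial.eval_mul, Polynomial.eval_one]
    nlinarith [sq_nonneg (P.eval r)]
  have hQrP : P.eval r ≤ Qr := by
    rw [hQr]
    simp only [Polynomial.eval_add, Polynomial.eval_mul, Polynomial.eval_one]
    nlinarith [sq_nonneg (P.eval r - 1)]
  have key2 : l2 H (conv H f' k') ≤ Qr * (l2 H f' * l2 H k') := by
    calc l2 H (conv H f' k') ≤ P.eval r * l2 H f' * l2 H k' := key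
      _ = P.eval r * (l2 H f' * l2 H k') := by ring
      _ ≤ Qr * (l2 H f' * l2 H k') := mul_le_mul_of_nonneg_right hQrP
          (mul_nonneg (Real.sqrt_nonneg _) (Real.sqrt_nonneg _))
  -- pointwise: EC M f k ≤ EC H f' k'
  have hsingle : ∀ w : G, ∀ u : Tq H M, f (w * (ρ u)⁻¹) ≤ f' w := by
    intro w u
    set u₁ : Tq H M := mkR (M.subgroupOf H) (1 : H) with hu₁
    set v₁ : Sq H M := QuotientGroup.mk ((u.out)⁻¹ : H) with hv₁
    have h1 : f (ρ u₁ * w * σ v₁) = f (w * (ρ u)⁻¹) := by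
      obtain ⟨n, hn, hout⟩ := exists_out_mkR (M.subgroupOf H) (1 : H)
      obtain ⟨m, hm⟩ := QuotientGroup.mk_out_eq_mul (M.subgroupOf H) ((u.out)⁻¹ : H)
      have hρ1 : ρ u₁ = ((n : H) : G) := by
        show ((u₁.out : H) : G) = _
        rw [hu₁, hout]
        push_cast
        simp
      have hσ1 : σ v₁ = (ρ u)⁻¹ * ((m : H) : G) := by
        show ((v₁.out : H) : G) = _
        rw [hv₁, hm]
        push_cast
        rfl
      have hnM : ((n : H) : G) ∈ M := (Subgroup.mem_subgroupOf).mp hn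
      have hmM : ((m : H) : G) ∈ M := (Subgroup.mem_subgroupOf).mp m.2
      rw [hρ1, hσ1]
      rw [show ((n : H) : G) * w * ((ρ u)⁻¹ * ((m : H) : G)) =
        ((n : H) : G) * ((w * (ρ u)⁻¹) * ((m : H) : G)) by group]
      rw [hfl _ hnM, hfr _ hmM]
    calc f (w * (ρ u)⁻¹) = f (ρ u₁ * w * σ v₁) := h1.symm
      _ ≤ ∑ v : Sq H M, f (ρ u₁ * w * σ v) :=
          Finset.single_le_sum (f := fun v : Sq H M => f (ρ u₁ * w * σ v))
            (fun v _ => h0f _) (Finset.mem_univ v₁)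
      _ ≤ ∑ u' : Tq H M, ∑ v : Sq H M, f (ρ u' * w * σ v) :=
          Finset.single_le_sum (f := fun u' : Tq H M => ∑ v : Sq H M, f (ρ u' * w * σ v))
            (fun u' _ => Finset.sum_nonneg fun v _ => h0f _) (Finset.mem_univ u₁)
      _ = f' w := rfl
  have hj : ∀ z : G, EC M f k z ≤ EC H f' k' z := by
    intro z
    have hφ : ∀ m ∈ M, ∀ w : G,
        (fun w => ENNReal.ofReal (f (z * w⁻¹)) * ENNReal.ofReal (k w)) (m * w) =
        (fun w => ENNReal.ofReal (f (z * w⁻¹)) * ENNReal.ofReal (k w)) w := by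
      intro m hm w
      simp only
      rw [show z * (m * w)⁻¹ = (z * w⁻¹) * m⁻¹ by group, hfr m⁻¹ (M.inv_mem hm),
        hkM m hm]
    calc EC M f k z = ∑' u : Tq H M, ∑' y : RCos H,
          ENNReal.ofReal (f (z * (ρ u * y.out)⁻¹)) * ENNReal.ofReal (k (ρ u * y.out)) :=
          decompE hMH (fun w => ENNReal.ofReal (f (z * w⁻¹)) * ENNReal.ofReal (k w)) hφ
      _ ≤ ∑' u : Tq H M, ∑' y : RCos H,
            ENNReal.ofReal (f' (z * y.out⁻¹)) * ENNReal.ofReal (k (ρ u * y.out)) := by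
          refine ENNReal.tsum_le_tsum fun u => ENNReal.tsum_le_tsum fun y => ?_
          refine mul_le_mul_left (ENNReal.ofReal_le_ofReal ?_) _
          rw [show z * (ρ u * y.out)⁻¹ = (z * y.out⁻¹) * (ρ u)⁻¹ by group]
          exact hsingle _ u
      _ = ∑ u : Tq H M, ∑' y : RCos H,
            ENNReal.ofReal (f' (z * y.out⁻¹)) * ENNReal.ofReal (k (ρ u * y.out)) :=
          tsum_fintype _
      _ = ∑' y : RCos H, ∑ u : Tq H M,
            ENNReal.ofReal (f' (z * y.out⁻¹)) * ENNReal.ofReal (k (ρ u * y.out)) :=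
          (Summable.tsum_finsetSum (fun u _ => ENNReal.summable)).symm
      _ = EC H f' k' z := by
          refine tsum_congr fun y => ?_
          rw [← Finset.mul_sum]
          congr 1
          rw [← ENNReal.ofReal_sum_of_nonneg (fun u _ => h0k _)]
  -- invariance of EC H f' k'
  have hECinv : ∀ h ∈ H, ∀ z, EC H f' k' (h * z) = EC H f' k' z := by
    intro h hh z
    refine tsum_congr fun y => ?_
    rw [show h * z * y.out⁻¹ = h * (z * y.out⁻¹) by group, hfl' h hh]
  -- a priori finiteness
  have hECne : ∑' y : RCos H, (EC H f' k' y.out) ^ 2 ≠ ⊤ :=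
    EC_sq_tsum_ne_top H hANH h0f' hbif' hFDf' h0k' hE2Hk'
  obtain ⟨dH, hdH⟩ := supp_left_card H hANH hFDf'
  have hECeq : ∀ z : G, ENNReal.ofReal (conv H f' k' z) = EC H f' k' z :=
    fun z => ofReal_conv_eq_EC h0f' h0k' z (hdH z).1
  have hE2Hconv_ne : E2 H (conv H f' k') ≠ ⊤ := by
    refine ne_top_of_le_ne_top hECne (le_of_eq (tsum_congr fun y => ?_))
    rw [hECeq y.out]
  -- assembling
  have hmain : E2 M (conv M f k) ≤
      (nT : ℝ≥0∞) * (ENNReal.ofReal (Qr ^ 2) * (((4 * nT * nS * (nT * nS) : ℕ) : ℝ≥0∞) *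
        E2 M f) * (((2 * nT * nT : ℕ) : ℝ≥0∞) * E2 M k)) := by
    calc E2 M (conv M f k)
        ≤ ∑' x : RCos M, (EC H f' k' x.out) ^ 2 := by
          refine ENNReal.tsum_le_tsum fun x => pow_le_pow_left' ?_ 2
          exact le_trans (ofReal_conv_le_EC h0f h0k x.out) (hj x.out)
      _ = (nT : ℝ≥0∞) * ∑' y : RCos H, (EC H f' k' y.out) ^ 2 :=
          tsum_split hMH hfin (fun z => (EC H f' k' z) ^ 2)
            (fun h hh z => by
              show (EC H f' k' (h * z)) ^ 2 = (EC H f' k' z) ^ 2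
              rw [hECinv h hh z])
      _ = (nT : ℝ≥0∞) * E2 H (conv H f' k') := by
          congr 1
          exact tsum_congr fun y => by rw [← hECeq y.out]
      _ ≤ (nT : ℝ≥0∞) * (ENNReal.ofReal (Qr ^ 2) * E2 H f' * E2 H k') := by
          refine mul_le_mul_right ?_ _
          rw [E2_eq_ofReal_l2_sq (conv_nonneg' h0f' h0k') hE2Hconv_ne,
            E2_eq_ofReal_l2_sq h0f' hE2Hf', E2_eq_ofReal_l2_sq h0k' hE2Hk']
          calc ENNReal.ofReal (l2 H (conv H f' k') ^ 2)
              ≤ ENNReal.ofReal ((Qr * (l2 H f' * l2 H k')) ^ 2) :=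
                ENNReal.ofReal_le_ofReal (pow_le_pow_left₀ (Real.sqrt_nonneg _) key2 2)
            _ = ENNReal.ofReal (Qr ^ 2) * ENNReal.ofReal (l2 H f' ^ 2) *
                ENNReal.ofReal (l2 H k' ^ 2) := by
                rw [show (Qr * (l2 H f' * l2 H k')) ^ 2 =
                  Qr ^ 2 * (l2 H f' ^ 2 * l2 H k' ^ 2) by ring,
                  ENNReal.ofReal_mul (sq_nonneg Qr),
                  ENNReal.ofReal_mul (sq_nonneg (l2 H f')), mul_assoc]
      _ ≤ (nT : ℝ≥0∞) * (ENNReal.ofReal (Qr ^ 2) *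
            (((4 * nT * nS * (nT * nS) : ℕ) : ℝ≥0∞) * E2 M f) *
            (((2 * nT * nT : ℕ) : ℝ≥0∞) * E2 M k)) := by
          exact mul_le_mul_right (mul_le_mul' (mul_le_mul_right hf'le _) hk'le) _
  have hofReal_c : ENNReal.ofReal ((Real.sqrt (cst : ℝ) * Qr) ^ 2) =
      ((cst : ℕ) : ℝ≥0∞) * ENNReal.ofReal (Qr ^ 2) := by
    rw [mul_pow, Real.sq_sqrt (Nat.cast_nonneg cst),
      ENNReal.ofReal_mul (Nat.cast_nonneg cst), ENNReal.ofReal_natCast]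
  have hfinal : E2 M (conv M f k) ≤
      ENNReal.ofReal ((Real.sqrt (cst : ℝ) * Qr) ^ 2) * E2 M f * E2 M k := by
    refine le_trans hmain (le_of_eq ?_)
    rw [hofReal_c, hcst]
    push_cast
    ring
  have hconc := l2_le_of_E2_le (N := M) (conv_nonneg' h0f h0k) h0f h0k
    (c := Real.sqrt (cst : ℝ) * Qr) (mul_nonneg (Real.sqrt_nonneg _) hQr0)
    hE2Mf hE2Mk hfinal
  calc l2 M (conv M f k) ≤ (Real.sqrt (cst : ℝ) * Qr) * l2 M f * l2 M k := hconc
    _ = (Polynomial.C (Real.sqrt (cst : ℝ)) * (P * P + 1)).eval r * l2 M f * l2 M k := by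
        rw [Polynomial.eval_mul, Polynomial.eval_C, hQr]

end Down
end HeckeAux


open HeckeAux

open HeckeRDPaper in
/-- If `gKg⁻¹` is strongly commensurable with `H` and `L` vanishes on
`gKg⁻¹ ∪ H`, then `(G,H)` has (RD) w.r.t. `L` iff `(G,K)` does. -/
theorem stmt10 {G : Type*} [Group G] (H K : Subgroup G)
    (hH : AlmostNormal H) (hK : AlmostNormal K)
    (g : G) (hcomm : StronglyCommensurable (conjS g K) H)
    (L : G → ℝ) (hL : IsLengthFunction L)
    (hLK : ∀ x ∈ conjS g K, L x = 0) (hLH : ∀ h ∈ H, L h = 0) :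
    HeckeRDwrt H L ↔ HeckeRDwrt K L := by
  set A : Subgroup G := conjS g K with hA
  set M : Subgroup G := A ⊓ H with hM
  have hA_AN : AlmostNormal A := almostNormal_conjS g K hK
  have hANM : AlmostNormal M := almostNormal_inf hA_AN hH
  have hMA : M ≤ A := inf_le_left
  have hMH' : M ≤ H := inf_le_right
  have hfinA : M.relIndex A ≠ 0 := hcomm.1
  have hfinH : M.relIndex H ≠ 0 := hcomm.2
  constructor
  · intro h
    have hM' : HeckeRDwrt M L := transfer_down hMH' hfinH hH hANM L hL hLH h
    have hA' : HeckeRDwrt A L := transfer_up A M hMA hfinA hA_AN hANM L hM'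
    have hK' := heckeRD_conj A L hL g⁻¹ hA'
    rwa [hA, conjS_conjS_inv] at hK'
  · intro h
    have hA' : HeckeRDwrt A L := heckeRD_conj K L hL g h
    have hM' : HeckeRDwrt M L := transfer_down hMA hfinA hA_AN hANM L hL hLK hA'
    exact transfer_up H M hMH' hfinH hH hANM L hM'
end
end

section
/- Let φ : G₁ → G₂ be a surjective group homomorphism and let H₁ be an almost normal subgroup of G₁ containing the kernel of φ. Then H₂ := φ(H₁) is an almost normal subgroup of G₂, and if the Hecke pair (G₁,H₁) has property (RD) with respect to a length function L₁, then there is a length function L₂ on (G₂,H₂) satisfying L₂∘φ = L₁ with respect to which the Hecke pair (G₂,H₂) has property (RD). -/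
noncomputable section

section Stmt11Aux

open HeckeRDPaper

variable {G₁ G₂ : Type*} [Group G₁] [Group G₂]

private lemma stmt11_resp (φ : G₁ →* G₂) (H₁ : Subgroup G₁) :
    ∀ a b : G₁, QuotientGroup.rightRel H₁ a b →
      QuotientGroup.rightRel (H₁.map φ) (φ a) (φ b) := by
  intro a b hab
  rw [QuotientGroup.rightRel_apply] at hab ⊢
  have : φ (b * a⁻¹) ∈ H₁.map φ := Subgroup.mem_map_of_mem φ hab
  simpa using this

/-- The induced map on right cosets. -/
private def rcMap (φ : G₁ →* G₂) (H₁ : Subgroup G₁) : RCos H₁ → RCos (H₁.map φ) :=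
  Quotient.map' φ (stmt11_resp φ H₁)

private lemma rcMap_mk (φ : G₁ →* G₂) (H₁ : Subgroup G₁) (g : G₁) :
    rcMap φ H₁ (Quotient.mk'' g) = Quotient.mk'' (φ g) := rfl

private lemma rcMap_bijective (φ : G₁ →* G₂) (hsurj : Function.Surjective φ)
    (H₁ : Subgroup G₁) (hker : φ.ker ≤ H₁) : Function.Bijective (rcMap φ H₁) := by
  constructor
  · intro x y hxy
    induction x using Quotient.inductionOn' with | h a =>
    induction y using Quotient.inductionOn' with | h b =>
    rw [rcMap_mk, rcMap_mk] at hxy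
    have hrel : QuotientGroup.rightRel (H₁.map φ) (φ a) (φ b) := Quotient.exact' hxy
    rw [QuotientGroup.rightRel_apply] at hrel
    obtain ⟨h, hh, hhe⟩ := hrel
    apply Quotient.sound'
    rw [QuotientGroup.rightRel_apply]
    have hkmem : h⁻¹ * (b * a⁻¹) ∈ φ.ker := by
      rw [MonoidHom.mem_ker]
      rw [map_mul, map_inv, map_mul, map_inv, hhe]
      group
    have := mul_mem hh (hker hkmem)
    simpa using this
  · intro y
    induction y using Quotient.inductionOn' with | h z =>
    obtain ⟨g, rfl⟩ := hsurj z
    exact ⟨Quotient.mk'' g, rfl⟩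

/-- The equivalence of right-coset spaces induced by `φ`. -/
private def rcEquiv (φ : G₁ →* G₂) (hsurj : Function.Surjective φ)
    (H₁ : Subgroup G₁) (hker : φ.ker ≤ H₁) : RCos H₁ ≃ RCos (H₁.map φ) :=
  Equiv.ofBijective _ (rcMap_bijective φ hsurj H₁ hker)

private lemma rcEquiv_out (φ : G₁ →* G₂) (hsurj : Function.Surjective φ)
    (H₁ : Subgroup G₁) (hker : φ.ker ≤ H₁) (x : RCos H₁) :
    ∃ h ∈ H₁.map φ, φ x.out = h * (rcEquiv φ hsurj H₁ hker x).out := by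
  have h1 : rcEquiv φ hsurj H₁ hker x = Quotient.mk'' (φ x.out) := by
    have : x = Quotient.mk'' x.out := x.out_eq'.symm
    conv_lhs => rw [this]
    rfl
  have h2 : (Quotient.mk'' (rcEquiv φ hsurj H₁ hker x).out : RCos (H₁.map φ))
      = Quotient.mk'' (φ x.out) := by
    rw [← h1]; exact (rcEquiv φ hsurj H₁ hker x).out_eq'
  have hrel := Quotient.exact' h2
  rw [QuotientGroup.rightRel_apply] at hrel
  refine ⟨φ x.out * (rcEquiv φ hsurj H₁ hker x).out⁻¹, hrel, ?_⟩
  group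

/-- For a left-invariant function, value at the corresponding representative. -/
private lemma inv_out_eq (φ : G₁ →* G₂) (hsurj : Function.Surjective φ)
    (H₁ : Subgroup G₁) (hker : φ.ker ≤ H₁) (F : G₂ → ℝ)
    (hF : ∀ g : G₂, ∀ h ∈ H₁.map φ, F (h * g) = F g) (x : RCos H₁) :
    F ((rcEquiv φ hsurj H₁ hker x).out) = F (φ x.out) := by
  obtain ⟨h, hh, he⟩ := rcEquiv_out φ hsurj H₁ hker x
  rw [he, hF _ h hh]

private lemma l2_comp (φ : G₁ →* G₂) (hsurj : Function.Surjective φ)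
    (H₁ : Subgroup G₁) (hker : φ.ker ≤ H₁) (F : G₂ → ℝ)
    (hF : ∀ g : G₂, ∀ h ∈ H₁.map φ, F (h * g) = F g) :
    l2 H₁ (F ∘ φ) = l2 (H₁.map φ) F := by
  unfold l2
  congr 1
  rw [← (rcEquiv φ hsurj H₁ hker).tsum_eq (fun y : RCos (H₁.map φ) => F y.out ^ 2)]
  exact tsum_congr fun x => by rw [inv_out_eq φ hsurj H₁ hker F hF x]; rfl

end Stmt11Aux

open HeckeRDPaper in
/-- Pushing forward (RD) along a surjective homomorphism whose kernel
is contained in the almost normal subgroup. -/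
theorem stmt11 {G₁ G₂ : Type*} [Group G₁] [Group G₂] (φ : G₁ →* G₂)
    (hsurj : Function.Surjective φ)
    (H₁ : Subgroup G₁) (hH₁ : AlmostNormal H₁) (hker : φ.ker ≤ H₁)
    (L₁ : G₁ → ℝ) (hL₁ : IsHeckeLength H₁ L₁) :
    AlmostNormal (H₁.map φ) ∧
      (HeckeRDwrt H₁ L₁ →
        ∃ L₂ : G₂ → ℝ, IsHeckeLength (H₁.map φ) L₂ ∧ (∀ g : G₁, L₂ (φ g) = L₁ g) ∧
          HeckeRDwrt (H₁.map φ) L₂) := by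
  constructor
  · -- Almost normality of the image
    intro g₂
    obtain ⟨g₁, rfl⟩ := hsurj g₂
    have hcomm : ((MulAut.conj (φ g₁)).toMonoidHom.comp φ : G₁ →* G₂)
        = φ.comp (MulAut.conj g₁).toMonoidHom := by
      ext x; simp
    have hmap : conjS (φ g₁) (H₁.map φ) = (conjS g₁ H₁).map φ := by
      unfold conjS
      rw [Subgroup.map_map, Subgroup.map_map, hcomm]
    have hkerc : φ.ker ≤ conjS g₁ H₁ := by
      intro n hn
      have h1 : g₁⁻¹ * n * g₁ ∈ φ.ker := by
        rw [MonoidHom.mem_ker] at hn ⊢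
        simp [hn]
      have h2 : (MulAut.conj g₁).toMonoidHom (g₁⁻¹ * n * g₁) = n := by
        simp [mul_assoc]
      exact h2 ▸ Subgroup.mem_map_of_mem _ (hker h1)
    have hcomap : (conjS (φ g₁) (H₁.map φ)).comap φ = conjS g₁ H₁ := by
      rw [hmap, Subgroup.comap_map_eq, sup_eq_left.mpr hkerc]
    have hrel := Subgroup.relIndex_comap (conjS (φ g₁) (H₁.map φ)) φ H₁
    rw [hcomap] at hrel
    rw [← hrel]
    exact hH₁ g₁
  · -- the (RD) transfer
    intro hRD
    obtain ⟨P, hP⟩ := hRD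
    -- the pushed-forward length function
    set σ : G₂ → G₁ := Function.surjInv hsurj with hσ
    have hσφ : ∀ y, φ (σ y) = y := fun y => Function.surjInv_eq hsurj y
    have hconst : ∀ a b : G₁, φ a = φ b → L₁ a = L₁ b := by
      have hle : ∀ a b : G₁, φ a = φ b → L₁ a ≤ L₁ b := by
        intro a b hab
        have hn : b⁻¹ * a ∈ φ.ker := by
          rw [MonoidHom.mem_ker]; simp [hab]
        have h0 : L₁ (b⁻¹ * a) = 0 := hL₁.2 _ (hker hn)
        calc L₁ a = L₁ (b * (b⁻¹ * a)) := by group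
          _ ≤ L₁ b + L₁ (b⁻¹ * a) := hL₁.1.subadd _ _
          _ = L₁ b := by rw [h0, add_zero]
      exact fun a b hab => le_antisymm (hle a b hab) (hle b a hab.symm)
    set L₂ : G₂ → ℝ := fun y => L₁ (σ y) with hL₂def
    have hL₂φ : ∀ g : G₁, L₂ (φ g) = L₁ g := by
      intro g
      exact hconst _ _ (hσφ (φ g))
    refine ⟨L₂, ⟨⟨fun y => hL₁.1.nonneg _, ?_, ?_, ?_⟩, ?_⟩, hL₂φ, ?_⟩
    · have := hL₂φ 1
      simpa [hL₁.1.map_one] using this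
    · intro y
      obtain ⟨g, rfl⟩ := hsurj y
      rw [← map_inv, hL₂φ, hL₂φ, hL₁.1.map_inv]
    · intro y z
      obtain ⟨g, rfl⟩ := hsurj y
      obtain ⟨g', rfl⟩ := hsurj z
      rw [← map_mul, hL₂φ, hL₂φ, hL₂φ]
      exact hL₁.1.subadd _ _
    · rintro h ⟨h₁, hh₁, rfl⟩
      rw [hL₂φ]
      exact hL₁.2 _ hh₁
    · -- property (RD) for (G₂, H₂)
      refine ⟨P, ?_⟩
      intro r hr f₂ k₂ hf₂pos hf₂inv hf₂fin hf₂L hk₂pos hk₂inv hk₂sum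
      set H₂ := H₁.map φ with hH₂
      have hf₂left : ∀ g : G₂, ∀ h ∈ H₂, f₂ (h * g) = f₂ g := by
        intro g h hh
        have := hf₂inv g h hh 1 (one_mem _)
        simpa using this
      have hk₂left : ∀ g : G₂, ∀ h ∈ H₂, k₂ (h * g) = k₂ g := hk₂inv
      -- pull back f and k
      have hf₁pos : ∀ g, 0 ≤ (f₂ ∘ φ) g := fun g => hf₂pos _
      have hf₁inv : ∀ g : G₁, ∀ h₁ ∈ H₁, ∀ h₂ ∈ H₁,
          (f₂ ∘ φ) (h₁ * g * h₂) = (f₂ ∘ φ) g := by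
        intro g h₁ hh₁ h₂ hh₂
        simp only [Function.comp_apply, map_mul]
        exact hf₂inv (φ g) (φ h₁) (Subgroup.mem_map_of_mem φ hh₁)
          (φ h₂) (Subgroup.mem_map_of_mem φ hh₂)
      have hf₁fin : FinDosetSupp H₁ (f₂ ∘ φ) := by
        unfold FinDosetSupp at hf₂fin ⊢
        have hsub : {s : Set G₁ | ∃ g : G₁, (f₂ ∘ φ) g ≠ 0 ∧
            s = {y : G₁ | ∃ h₁ ∈ H₁, ∃ h₂ ∈ H₁, y = h₁ * g * h₂}}
            ⊆ (fun t : Set G₂ => φ ⁻¹' t) '' {s : Set G₂ | ∃ g : G₂, f₂ g ≠ 0 ∧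
              s = {y : G₂ | ∃ h₁ ∈ H₂, ∃ h₂ ∈ H₂, y = h₁ * g * h₂}} := by
          rintro s ⟨g, hg, rfl⟩
          refine ⟨{y : G₂ | ∃ h₁ ∈ H₂, ∃ h₂ ∈ H₂, y = h₁ * φ g * h₂}, ⟨φ g, hg, rfl⟩, ?_⟩
          ext y
          simp only [Set.mem_preimage, Set.mem_setOf_eq]
          constructor
          · rintro ⟨c₁, hc₁, c₂, hc₂, hy⟩
            obtain ⟨a₁, ha₁, rfl⟩ := hc₁
            obtain ⟨a₂, ha₂, rfl⟩ := hc₂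
            have hn : (a₁ * g * a₂)⁻¹ * y ∈ φ.ker := by
              rw [MonoidHom.mem_ker]
              simp [hy, mul_assoc]
            refine ⟨a₁, ha₁, a₂ * ((a₁ * g * a₂)⁻¹ * y),
              mul_mem ha₂ (hker hn), ?_⟩
            group
          · rintro ⟨h₁, hh₁, h₂, hh₂, rfl⟩
            exact ⟨φ h₁, Subgroup.mem_map_of_mem φ hh₁, φ h₂,
              Subgroup.mem_map_of_mem φ hh₂, by simp⟩
        exact (hf₂fin.image _).subset hsub
      have hf₁L : ∀ g, (f₂ ∘ φ) g ≠ 0 → L₁ g ≤ r := by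
        intro g hg
        rw [← hL₂φ g]
        exact hf₂L (φ g) hg
      have hk₁pos : ∀ g, 0 ≤ (k₂ ∘ φ) g := fun g => hk₂pos _
      have hk₁inv : ∀ g : G₁, ∀ h ∈ H₁, (k₂ ∘ φ) (h * g) = (k₂ ∘ φ) g := by
        intro g h hh
        simp only [Function.comp_apply, map_mul]
        exact hk₂inv (φ g) (φ h) (Subgroup.mem_map_of_mem φ hh)
      have hk₁sum : Summable (fun x : RCos H₁ => (k₂ ∘ φ) x.out ^ 2) := by
        have := (rcEquiv φ hsurj H₁ hker).summable_iff.mpr hk₂sum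
        refine this.congr fun x => ?_
        simp only [Function.comp_apply]
        rw [inv_out_eq φ hsurj H₁ hker k₂ hk₂left x]
      have key := hP r hr (f₂ ∘ φ) (k₂ ∘ φ) hf₁pos hf₁inv hf₁fin hf₁L hk₁pos hk₁inv hk₁sum
      -- identify the three norms
      have hconv : conv H₁ (f₂ ∘ φ) (k₂ ∘ φ) = (conv H₂ f₂ k₂) ∘ φ := by
        funext g
        simp only [conv, Function.comp_apply]
        rw [← (rcEquiv φ hsurj H₁ hker).tsum_eq
          (fun y : RCos H₂ => f₂ (φ g * y.out⁻¹) * k₂ y.out)]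
        refine tsum_congr fun x => ?_
        obtain ⟨h, hh, he⟩ := rcEquiv_out φ hsurj H₁ hker x
        have h1 : k₂ (φ x.out) = k₂ ((rcEquiv φ hsurj H₁ hker x).out) := by
          rw [he, hk₂left _ h hh]
        have h2 : f₂ (φ g * (φ x.out)⁻¹)
            = f₂ (φ g * ((rcEquiv φ hsurj H₁ hker x).out)⁻¹) := by
          rw [he, mul_inv_rev, ← mul_assoc]
          have := hf₂inv (φ g * ((rcEquiv φ hsurj H₁ hker x).out)⁻¹) 1 (one_mem _)
            h⁻¹ (inv_mem hh)
          simpa using this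
        simp only [map_mul, map_inv]
        rw [h1, h2]
      have hconvinv : ∀ g : G₂, ∀ h ∈ H₂, conv H₂ f₂ k₂ (h * g) = conv H₂ f₂ k₂ g := by
        intro g h hh
        simp only [conv]
        refine tsum_congr fun x => ?_
        congr 1
        rw [mul_assoc]
        exact hf₂left _ h hh
      have e1 : l2 H₁ (conv H₁ (f₂ ∘ φ) (k₂ ∘ φ)) = l2 H₂ (conv H₂ f₂ k₂) := by
        rw [hconv]
        exact l2_comp φ hsurj H₁ hker _ hconvinv
      have e2 : l2 H₁ (f₂ ∘ φ) = l2 H₂ f₂ := l2_comp φ hsurj H₁ hker _ hf₂left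
      have e3 : l2 H₁ (k₂ ∘ φ) = l2 H₂ k₂ := l2_comp φ hsurj H₁ hker _ hk₂left
      rw [e1, e2, e3] at key
      exact key
end
end

section
/- Let E be a group, G a normal subgroup of E, H an almost normal subgroup of G, and σ : E/G → E a cross-section of the quotient map consistent with the Hecke pair (G,H). Then for every g ∈ G and every x ∈ E/G one has H ∩ gHg⁻¹ ⊆ H ∩ (gσ(x))H(gσ(x))⁻¹; consequently H is an almost normal subgroup of E. -/
noncomputable section

open HeckeRDPaper in
lemma mem_conjS' {E : Type*} [Group E] (g x : E) (H : Subgroup E) :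
    x ∈ conjS g H ↔ g⁻¹ * x * g ∈ H := by
  constructor
  · rintro ⟨a, ha, rfl⟩
    simpa [MulAut.conj, mul_assoc] using ha
  · intro h
    exact ⟨g⁻¹ * x * g, h, by simp [MulAut.conj]; group⟩

open HeckeRDPaper in
lemma conjS_mul' {E : Type*} [Group E] (a b : E) (H : Subgroup E) :
    conjS (a * b) H = conjS a (conjS b H) := by
  ext x
  simp only [mem_conjS']
  constructor <;> intro h
  · have e : b⁻¹ * (a⁻¹ * x * a) * b = (a * b)⁻¹ * x * (a * b) := by group
    rw [e]; exact h
  · have e : (a * b)⁻¹ * x * (a * b) = b⁻¹ * (a⁻¹ * x * a) * b := by group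
    rw [e]; exact h

open HeckeRDPaper in
/-- For a consistent cross-section, `H ∩ gHg⁻¹ ⊆ H ∩ (gσ(x))H(gσ(x))⁻¹`
for all `g ∈ G`, `x ∈ E/G`; consequently `H` is almost normal in `E`. -/
theorem stmt12 {E : Type*} [Group E] (G H : Subgroup E) [G.Normal] (hHG : H ≤ G)
    (hAN : AlmostNormal (H.subgroupOf G))
    (σ : E ⧸ G → E) (hσ : ConsistentSection G H σ) :
    (∀ g ∈ G, ∀ x : E ⧸ G, H ⊓ conjS g H ≤ H ⊓ conjS (g * σ x) H) ∧
      AlmostNormal H := by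
  obtain ⟨hsec, hone, hcons⟩ := hσ
  have hconjσ : ∀ x : E ⧸ G, conjS (σ x) H = H := by
    intro x
    ext y
    rw [mem_conjS']
    constructor
    · intro hy
      have := (hcons x ((σ x)⁻¹ * y * σ x)).mp hy
      simpa [mul_assoc] using this
    · intro hy
      rw [hcons x]
      simpa [mul_assoc] using hy
  have key : ∀ (g : E) (x : E ⧸ G), conjS (g * σ x) H = conjS g H := by
    intro g x
    rw [conjS_mul', hconjσ]
  constructor
  · intro g _ x
    rw [key]
  · intro e
    set x : E ⧸ G := (e : E ⧸ G) with hx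
    have hg : e * (σ x)⁻¹ ∈ G := by
      have : ((e * (σ x)⁻¹ : E) : E ⧸ G) = 1 := by
        rw [QuotientGroup.mk_mul, QuotientGroup.mk_inv, hsec]
        simp [hx]
      exact (QuotientGroup.eq_one_iff _).mp this
    have he : e = (e * (σ x)⁻¹) * σ x := by group
    have hce : conjS e H = conjS (e * (σ x)⁻¹) H := by
      conv_lhs => rw [he]
      exact key _ _
    rw [hce]
    have hle : conjS (e * (σ x)⁻¹) H ≤ G := by
      intro y hy
      rw [mem_conjS'] at hy
      have h1 : y = (e * (σ x)⁻¹) * ((e * (σ x)⁻¹)⁻¹ * y * (e * (σ x)⁻¹)) * (e * (σ x)⁻¹)⁻¹ := by group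
      rw [h1]
      exact mul_mem (mul_mem hg (hHG hy)) (inv_mem hg)
    have heq : (conjS (e * (σ x)⁻¹) H).subgroupOf G =
        conjS (⟨e * (σ x)⁻¹, hg⟩ : G) (H.subgroupOf G) := by
      ext ⟨y, hy⟩
      simp only [Subgroup.mem_subgroupOf, mem_conjS']
      rfl
    have := hAN ⟨e * (σ x)⁻¹, hg⟩
    rwa [← heq, Subgroup.relIndex_subgroupOf hHG] at this
end
end

section
/- Let E be a group, G a normal subgroup of E, H an almost normal subgroup of G, and σ : E/G → E a cross-section of the quotient map consistent with the Hecke pair (G,H). Then for all β, γ ∈ E/G, the assignment g ↦ σ(γ)σ(β)⁻¹ g σ(γβ⁻¹)⁻¹ sends elements of G to elements of G and induces a well-defined bijection of the set G/H of left cosets of H in G onto itself. -/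
noncomputable section

open HeckeRDPaper in
/-- For a consistent cross-section, `g ↦ σ(γ)σ(β)⁻¹ g σ(γβ⁻¹)⁻¹` maps `G`
to `G` and induces a well-defined bijection of the set of left cosets of `H` in `G`. -/
theorem stmt14 {E : Type*} [Group E] (G H : Subgroup E) [G.Normal] (hHG : H ≤ G)
    (hAN : AlmostNormal (H.subgroupOf G))
    (σ : E ⧸ G → E) (hσ : ConsistentSection G H σ)
    (β γ : E ⧸ G) :
    -- the map sends `G` into `G`
    (∀ g ∈ G, σ γ * (σ β)⁻¹ * g * (σ (γ * β⁻¹))⁻¹ ∈ G) ∧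
    -- it is well defined and injective on left cosets of `H` in `G`
    (∀ g₁ ∈ G, ∀ g₂ ∈ G,
      (g₁⁻¹ * g₂ ∈ H ↔
        (σ γ * (σ β)⁻¹ * g₁ * (σ (γ * β⁻¹))⁻¹)⁻¹ *
          (σ γ * (σ β)⁻¹ * g₂ * (σ (γ * β⁻¹))⁻¹) ∈ H)) ∧
    -- it is surjective on left cosets of `H` in `G`
    (∀ g ∈ G, ∃ g' ∈ G, (σ γ * (σ β)⁻¹ * g' * (σ (γ * β⁻¹))⁻¹)⁻¹ * g ∈ H) := by
  obtain ⟨hsec, hone, hcons⟩ := hσ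
  have memG : ∀ e : E, e ∈ G ↔ (QuotientGroup.mk e : E ⧸ G) = 1 := fun e =>
    (QuotientGroup.eq_one_iff e).symm
  have hmapG : ∀ g ∈ G, σ γ * (σ β)⁻¹ * g * (σ (γ * β⁻¹))⁻¹ ∈ G := by
    intro g hg
    rw [memG]
    have hg1 : (QuotientGroup.mk g : E ⧸ G) = 1 := (memG g).mp hg
    simp only [QuotientGroup.mk_mul, QuotientGroup.mk_inv, hsec, hg1]
    group
  refine ⟨hmapG, ?_, ?_⟩
  · intro g₁ _ g₂ _
    have key : (σ γ * (σ β)⁻¹ * g₁ * (σ (γ * β⁻¹))⁻¹)⁻¹ *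
        (σ γ * (σ β)⁻¹ * g₂ * (σ (γ * β⁻¹))⁻¹)
        = σ (γ * β⁻¹) * (g₁⁻¹ * g₂) * (σ (γ * β⁻¹))⁻¹ := by group
    rw [key]
    exact hcons (γ * β⁻¹) (g₁⁻¹ * g₂)
  · intro g hg
    refine ⟨(σ γ * (σ β)⁻¹)⁻¹ * g * σ (γ * β⁻¹), ?_, ?_⟩
    · rw [memG]
      have hg1 : (QuotientGroup.mk g : E ⧸ G) = 1 := (memG g).mp hg
      simp only [QuotientGroup.mk_mul, QuotientGroup.mk_inv, hsec, hg1]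
      group
    · have : (σ γ * (σ β)⁻¹ * ((σ γ * (σ β)⁻¹)⁻¹ * g * σ (γ * β⁻¹)) *
          (σ (γ * β⁻¹))⁻¹)⁻¹ * g = 1 := by group
      rw [this]
      exact H.one_mem
end
end

section
/- Let E be a group, G a normal subgroup of E, H an almost normal subgroup of G, and σ : E/G → E a cross-section of the quotient map consistent with the Hecke pair (G,H). Then the map (Hg, x) ↦ H(gσ(x)) is a well-defined bijection from (H\G) × (E/G) onto the set H\E of right cosets of H in E. -/
noncomputable section

open HeckeRDPaper in
/-- For a consistent cross-section, `(Hg, x) ↦ H(gσ(x))` is a well-defined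
bijection from `(H\G) × (E/G)` onto `H\E`. -/
theorem stmt15 {E : Type*} [Group E] (G H : Subgroup E) [G.Normal] (hHG : H ≤ G)
    (hAN : AlmostNormal (H.subgroupOf G))
    (σ : E ⧸ G → E) (hσ : ConsistentSection G H σ) :
    -- well defined and injective: `H(g₁σ(x₁)) = H(g₂σ(x₂))` iff `Hg₁ = Hg₂` and `x₁ = x₂`
    (∀ g₁ ∈ G, ∀ g₂ ∈ G, ∀ x₁ x₂ : E ⧸ G,
      ((g₁ * σ x₁) * (g₂ * σ x₂)⁻¹ ∈ H ↔ (g₁ * g₂⁻¹ ∈ H ∧ x₁ = x₂))) ∧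
    -- surjective: every right coset of `H` in `E` is of the form `H(gσ(x))`
    (∀ e : E, ∃ g ∈ G, ∃ x : E ⧸ G, (g * σ x) * e⁻¹ ∈ H) := by
  obtain ⟨hsec, -, -⟩ := hσ
  constructor
  · intro g₁ hg₁ g₂ hg₂ x₁ x₂
    constructor
    · intro hmem
      have hG : g₁ * σ x₁ * (g₂ * σ x₂)⁻¹ ∈ G := hHG hmem
      have hσG : σ x₁ * (σ x₂)⁻¹ ∈ G := by
        have h1 : g₁⁻¹ * (g₁ * σ x₁ * (g₂ * σ x₂)⁻¹) * g₂ ∈ G := by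
          exact G.mul_mem (G.mul_mem (G.inv_mem hg₁) hG) hg₂
        have : g₁⁻¹ * (g₁ * σ x₁ * (g₂ * σ x₂)⁻¹) * g₂ = σ x₁ * (σ x₂)⁻¹ := by
          group
        rwa [this] at h1
      have hx : x₁ = x₂ := by
        rw [← hsec x₁, ← hsec x₂]
        apply QuotientGroup.eq.mpr
        have h2 : (σ x₂) * (σ x₁)⁻¹ ∈ G := by
          simpa [mul_inv_rev] using G.inv_mem hσG
        exact Subgroup.Normal.mem_comm ‹G.Normal› h2
      refine ⟨?_, hx⟩
      subst hx
      have : g₁ * σ x₁ * (g₂ * σ x₁)⁻¹ = g₁ * g₂⁻¹ := by group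
      rwa [this] at hmem
    · rintro ⟨hH, rfl⟩
      have : g₁ * σ x₁ * (g₂ * σ x₁)⁻¹ = g₁ * g₂⁻¹ := by group
      rw [this]; exact hH
  · intro e
    refine ⟨e * (σ (QuotientGroup.mk e))⁻¹, ?_, QuotientGroup.mk e, ?_⟩
    · have : (QuotientGroup.mk (e * (σ (QuotientGroup.mk e))⁻¹) : E ⧸ G) = 1 := by
        rw [QuotientGroup.mk_mul, QuotientGroup.mk_inv, hsec]
        simp
      exact (QuotientGroup.eq_one_iff _).mp this
    · have : e * (σ (QuotientGroup.mk e))⁻¹ * σ (QuotientGroup.mk e) * e⁻¹ = 1 := by group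
      rw [this]; exact H.one_mem
end
end
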